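/- arXiv:1506.07550 — 6 statements merged into one kernel-verified Lean document; each statement's English description precedes it below -/
import Mathlib

section
/- If ω is a positive semidefinite matrix of the form ω = ∑_I |ψ_I⟩⟨ψ_I| where the entries of each vector ψ_I are polynomials in a complex parameter γ, then det(ω(γ)) = ∑_{I₁,...,I_n} |⟨Ψ₋|ψ_{I₁}⊗···⊗ψ_{I_n}⟩|², a sum of squared absolute values of polynomials in γ; in particular, if det(ω(γ₀)) > 0 for some γ₀, then the set of γ ∈ ℂ with det(ω(γ)) = 0 is contained in the zero set of a nonzero polynomial and hence is a discrete (isolated) subset of ℂ. -/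
open Matrix

/-- The normalized totally antisymmetric vector in `(ℂⁿ)^{⊗n}`. -/
noncomputable def antisymVec' (n : ℕ) : (Fin n → Fin n) → ℂ := fun f =>
  if h : Function.Bijective f then
    ((Equiv.Perm.sign (Equiv.ofBijective f h) : ℤ) : ℂ) / (Real.sqrt n.factorial : ℂ)
  else 0


lemma sum_perm_of_support {n : ℕ} (g : (Fin n → Fin n) → ℂ)
    (h0 : ∀ f, ¬ Function.Bijective f → g f = 0) :
    ∑ f, g f = ∑ σ : Equiv.Perm (Fin n), g ⇑σ := by
  have h1 : (∑ σ : Equiv.Perm (Fin n), g ⇑σ)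
      = ∑ f ∈ Finset.univ.image (fun σ : Equiv.Perm (Fin n) => ⇑σ), g f :=
    (Finset.sum_image (by intro x _ y _ h; exact Equiv.coe_fn_injective h)).symm
  rw [h1]
  refine (Finset.sum_subset (Finset.subset_univ _) ?_).symm
  intro f _ hf
  refine h0 f ?_
  intro hbij
  exact hf (Finset.mem_image.2 ⟨Equiv.ofBijective f hbij, Finset.mem_univ _, rfl⟩)

lemma antisym_coe {n : ℕ} (σ : Equiv.Perm (Fin n)) :
    antisymVec' n ⇑σ = ((Equiv.Perm.sign σ : ℤ) : ℂ) / (Real.sqrt n.factorial : ℂ) := by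
  have hb : Function.Bijective ⇑σ := σ.bijective
  have : Equiv.ofBijective ⇑σ hb = σ := by ext x; rfl
  simp [antisymVec', hb, this]

lemma main_identity {n : ℕ} {ι : Type} [Fintype ι] (v : ι → Fin n → ℂ) :
    (∑ I, Matrix.vecMulVec (v I) (star (v I))).det
    = ∑ F : Fin n → ι, ((‖∑ f : Fin n → Fin n,
        (starRingEnd ℂ) (antisymVec' n f) * ∏ j, v (F j) (f j)‖ ^ 2 : ℝ) : ℂ) := by
  classical
  set c : ℝ := Real.sqrt n.factorial with hc
  have hcpos : 0 < c := Real.sqrt_pos.2 (by exact_mod_cast n.factorial_pos)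
  have hcc : (c : ℂ) * (c : ℂ) = (n.factorial : ℂ) := by
    rw [← Complex.ofReal_mul, Real.mul_self_sqrt (by positivity)]
    norm_cast
  have hfac : ((n.factorial : ℂ)) ≠ 0 := by
    exact_mod_cast Nat.cast_ne_zero.2 n.factorial_pos.ne'
  -- the polynomial-like amplitude for each F
  set D : (Fin n → ι) → ℂ := fun F =>
    ∑ σ : Equiv.Perm (Fin n), ((Equiv.Perm.sign σ : ℤ) : ℂ) * ∏ j, v (F j) (σ j) with hD
  have hS : ∀ F : Fin n → ι,
      (∑ f : Fin n → Fin n, (starRingEnd ℂ) (antisymVec' n f) * ∏ j, v (F j) (f j))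
      = D F / (c : ℂ) := by
    intro F
    rw [sum_perm_of_support _ (fun f hf => by
      have h0 : antisymVec' n f = 0 := dif_neg hf
      simp [h0])]
    rw [hD, Finset.sum_div]
    refine Finset.sum_congr rfl fun σ _ => ?_
    rw [antisym_coe]
    rw [map_div₀]
    simp [div_mul_eq_mul_div]
    rfl
  -- each squared norm as a product with conjugate
  have hsq : ∀ F : Fin n → ι,
      ((‖∑ f : Fin n → Fin n,
        (starRingEnd ℂ) (antisymVec' n f) * ∏ j, v (F j) (f j)‖ ^ 2 : ℝ) : ℂ)
      = (D F * (starRingEnd ℂ) (D F)) / (n.factorial : ℂ) := by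
    intro F
    rw [show ((‖∑ f : Fin n → Fin n,
        (starRingEnd ℂ) (antisymVec' n f) * ∏ j, v (F j) (f j)‖ ^ 2 : ℝ) : ℂ)
      = (∑ f : Fin n → Fin n, (starRingEnd ℂ) (antisymVec' n f) * ∏ j, v (F j) (f j))
        * (starRingEnd ℂ) (∑ f : Fin n → Fin n,
          (starRingEnd ℂ) (antisymVec' n f) * ∏ j, v (F j) (f j)) by
        rw [Complex.mul_conj]
        norm_cast
        simp [Complex.normSq_eq_norm_sq]]
    rw [hS, map_div₀, Complex.conj_ofReal, div_mul_div_comm, hcc]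
  -- expansion of the determinant
  have hdet : (∑ I, Matrix.vecMulVec (v I) (star (v I))).det
      = ∑ ρ : Equiv.Perm (Fin n), ((Equiv.Perm.sign ρ : ℤ) : ℂ) *
          ∑ G : Fin n → ι, ∏ i, (v (G i) (ρ i) * (starRingEnd ℂ) (v (G i) i)) := by
    rw [Matrix.det_apply]
    refine Finset.sum_congr rfl fun σ _ => ?_
    have h1 : (∏ i, (∑ I, Matrix.vecMulVec (v I) (star (v I))) (σ i) i)
        = ∏ i, ∑ I, v I (σ i) * (starRingEnd ℂ) (v I i) := by
      refine Finset.prod_congr rfl fun i _ => ?_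
      simp [Matrix.sum_apply, Matrix.vecMulVec_apply, RCLike.star_def]
    have h2 := (MultilinearMap.mkPiAlgebra ℂ (Fin n) ℂ).map_sum
      (fun i I => v I (σ i) * (starRingEnd ℂ) (v I i))
    simp only [MultilinearMap.mkPiAlgebra_apply] at h2
    rw [h1, h2, Units.smul_def, zsmul_eq_mul]
  -- key reindexing step: for every τ the double sum equals the determinant expansion
  have hτ : ∀ τ : Equiv.Perm (Fin n),
      (∑ G : Fin n → ι, ∑ ρ : Equiv.Perm (Fin n),
        ((Equiv.Perm.sign ρ : ℤ) : ℂ) * ∏ i, (v (G i) (ρ i) * (starRingEnd ℂ) (v (G i) i)))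
      = ∑ F : Fin n → ι, ∑ σ : Equiv.Perm (Fin n),
          ((((Equiv.Perm.sign σ : ℤ) : ℂ) * ∏ j, v (F j) (σ j)) *
           ((((Equiv.Perm.sign τ : ℤ) : ℂ)) * ∏ j, (starRingEnd ℂ) (v (F j) (τ j)))) := by
    intro τ
    have hττ : ((Equiv.Perm.sign τ : ℤ) : ℂ) * ((Equiv.Perm.sign τ : ℤ) : ℂ) = 1 := by
      rcases Int.units_eq_one_or (Equiv.Perm.sign τ) with h | h <;> simp [h]
    refine Fintype.sum_equiv (Equiv.arrowCongr τ.symm (Equiv.refl ι)) _ _ fun G => ?_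
    have hG : (Equiv.arrowCongr τ.symm (Equiv.refl ι)) G = fun j => G (τ j) := by
      funext j; simp
    rw [hG]
    refine Fintype.sum_equiv (Equiv.mulRight τ) _ _ fun ρ => ?_
    have hsign : ((Equiv.Perm.sign (ρ * τ) : ℤ) : ℂ)
        = ((Equiv.Perm.sign ρ : ℤ) : ℂ) * ((Equiv.Perm.sign τ : ℤ) : ℂ) := by
      rw [Equiv.Perm.sign_mul]; push_cast; ring
    have hprod := Equiv.prod_comp τ (fun i => v (G i) (ρ i) * (starRingEnd ℂ) (v (G i) i))
    simp only [Equiv.coe_mulRight, Equiv.Perm.coe_mul, Function.comp_apply,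
      Equiv.Perm.mul_apply]
    rw [hsign, ← hprod, Finset.prod_mul_distrib]
    ring_nf
    have h2 : ((Equiv.Perm.sign τ : ℤ) : ℂ) ^ 2 = 1 := by rw [sq, hττ]
    rw [h2, mul_one]
  -- conjugate of D
  have hDD : ∀ F : Fin n → ι, D F * (starRingEnd ℂ) (D F)
      = ∑ σ : Equiv.Perm (Fin n), ∑ τ : Equiv.Perm (Fin n),
          ((((Equiv.Perm.sign σ : ℤ) : ℂ) * ∏ j, v (F j) (σ j)) *
           ((((Equiv.Perm.sign τ : ℤ) : ℂ)) * ∏ j, (starRingEnd ℂ) (v (F j) (τ j)))) := by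
    intro F
    have hconj : (starRingEnd ℂ) (D F)
        = ∑ τ : Equiv.Perm (Fin n), ((Equiv.Perm.sign τ : ℤ) : ℂ)
            * ∏ j, (starRingEnd ℂ) (v (F j) (τ j)) := by
      rw [hD]
      rw [map_sum]
      refine Finset.sum_congr rfl fun τ _ => ?_
      simp [_root_.map_mul, _root_.map_prod]
    rw [hconj, hD, Fintype.sum_mul_sum]
  -- assemble everything
  have hrw : (∑ F : Fin n → ι, ((‖∑ f : Fin n → Fin n,
        (starRingEnd ℂ) (antisymVec' n f) * ∏ j, v (F j) (f j)‖ ^ 2 : ℝ) : ℂ))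
      = (∑ F : Fin n → ι, D F * (starRingEnd ℂ) (D F)) / (n.factorial : ℂ) := by
    rw [Finset.sum_div]
    exact Finset.sum_congr rfl fun F _ => hsq F
  rw [hrw, eq_div_iff hfac]
  have hE : ∑ ρ : Equiv.Perm (Fin n), ((Equiv.Perm.sign ρ : ℤ) : ℂ) *
        ∑ G : Fin n → ι, ∏ i, (v (G i) (ρ i) * (starRingEnd ℂ) (v (G i) i))
      = ∑ G : Fin n → ι, ∑ ρ : Equiv.Perm (Fin n),
          ((Equiv.Perm.sign ρ : ℤ) : ℂ) * ∏ i, (v (G i) (ρ i) * (starRingEnd ℂ) (v (G i) i)) := by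
    simp_rw [Finset.mul_sum]
    exact Finset.sum_comm
  calc (∑ I, Matrix.vecMulVec (v I) (star (v I))).det * (n.factorial : ℂ)
      = (n.factorial : ℂ) * (∑ G : Fin n → ι, ∑ ρ : Equiv.Perm (Fin n),
          ((Equiv.Perm.sign ρ : ℤ) : ℂ) * ∏ i, (v (G i) (ρ i) * (starRingEnd ℂ) (v (G i) i))) := by
        rw [hdet, hE]; ring
    _ = ∑ _τ : Equiv.Perm (Fin n), (∑ G : Fin n → ι, ∑ ρ : Equiv.Perm (Fin n),
          ((Equiv.Perm.sign ρ : ℤ) : ℂ) * ∏ i, (v (G i) (ρ i) * (starRingEnd ℂ) (v (G i) i))) := by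
        rw [Finset.sum_const, Finset.card_univ, Fintype.card_perm, Fintype.card_fin,
          nsmul_eq_mul]
    _ = ∑ τ : Equiv.Perm (Fin n), ∑ F : Fin n → ι, ∑ σ : Equiv.Perm (Fin n),
          ((((Equiv.Perm.sign σ : ℤ) : ℂ) * ∏ j, v (F j) (σ j)) *
           ((((Equiv.Perm.sign τ : ℤ) : ℂ)) * ∏ j, (starRingEnd ℂ) (v (F j) (τ j)))) :=
        Finset.sum_congr rfl fun τ _ => hτ τ
    _ = ∑ F : Fin n → ι, ∑ σ : Equiv.Perm (Fin n), ∑ τ : Equiv.Perm (Fin n),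
          ((((Equiv.Perm.sign σ : ℤ) : ℂ) * ∏ j, v (F j) (σ j)) *
           ((((Equiv.Perm.sign τ : ℤ) : ℂ)) * ∏ j, (starRingEnd ℂ) (v (F j) (τ j)))) := by
        rw [Finset.sum_comm]
        exact Finset.sum_congr rfl fun F _ => Finset.sum_comm
    _ = ∑ F : Fin n → ι, D F * (starRingEnd ℂ) (D F) :=
        (Finset.sum_congr rfl fun F _ => (hDD F).symm)



/-- If `ω(γ) = ∑_I |ψ_I(γ)⟩⟨ψ_I(γ)|` with polynomially-varying vectors `ψ_I`, then
`det ω(γ) = ∑_{I₁,…,I_n} |⟨Ψ₋|ψ_{I₁}⊗⋯⊗ψ_{I_n}⟩|²`, a sum of squared absolute values of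
polynomials in `γ`; hence if `det ω(γ₀) > 0` for some `γ₀`, the zero set of `γ ↦ det ω(γ)`
is contained in the zero set of a nonzero polynomial and consists of isolated points. -/
theorem det_sum_squares_and_isolated_zeros (n : ℕ) (ι : Type) [Fintype ι]
    (ψ : ι → ℂ → (Fin n → ℂ))
    (hpoly : ∀ I k, ∃ p : Polynomial ℂ, ∀ γ, ψ I γ k = p.eval γ)
    (ω : ℂ → Matrix (Fin n) (Fin n) ℂ)
    (hω : ∀ γ, ω γ = ∑ I, Matrix.vecMulVec (ψ I γ) (star (ψ I γ))) :
    (∀ γ, (ω γ).det = ∑ F : Fin n → ι,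
      ((‖∑ f : Fin n → Fin n,
          (starRingEnd ℂ) (antisymVec' n f) * ∏ j, ψ (F j) γ (f j)‖ ^ 2 : ℝ) : ℂ)) ∧
    (∀ γ₀ : ℂ, 0 < ((ω γ₀).det).re →
      (∃ p : Polynomial ℂ, p ≠ 0 ∧ ∀ γ, (ω γ).det = 0 → p.eval γ = 0) ∧
      (∀ γ, (ω γ).det = 0 → ∃ ε > (0:ℝ), ∀ γ', γ' ≠ γ →
        ‖γ' - γ‖ < ε → (ω γ').det ≠ 0)) := by
  classical
  have part1 : ∀ γ, (ω γ).det = ∑ F : Fin n → ι,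
      ((‖∑ f : Fin n → Fin n,
          (starRingEnd ℂ) (antisymVec' n f) * ∏ j, ψ (F j) γ (f j)‖ ^ 2 : ℝ) : ℂ) := by
    intro γ
    rw [hω γ]
    exact main_identity (fun I => ψ I γ)
  refine ⟨part1, ?_⟩
  intro γ₀ h₀
  -- choose polynomial representatives
  choose p hp using hpoly
  set Q : (Fin n → ι) → Polynomial ℂ := fun F =>
    ∑ f : Fin n → Fin n, Polynomial.C ((starRingEnd ℂ) (antisymVec' n f))
      * ∏ j, p (F j) (f j) with hQdef
  have hQ : ∀ (F : Fin n → ι) (γ : ℂ), (Q F).eval γ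
      = ∑ f : Fin n → Fin n, (starRingEnd ℂ) (antisymVec' n f) * ∏ j, ψ (F j) γ (f j) := by
    intro F γ
    rw [hQdef]
    rw [Polynomial.eval_finset_sum]
    refine Finset.sum_congr rfl fun f _ => ?_
    rw [Polynomial.eval_mul, Polynomial.eval_C, Polynomial.eval_prod]
    exact congrArg _ (Finset.prod_congr rfl fun j _ => (hp (F j) (f j) γ).symm)
  have hdetQ : ∀ γ, (ω γ).det = ∑ F : Fin n → ι, ((‖(Q F).eval γ‖ ^ 2 : ℝ) : ℂ) := by
    intro γ
    rw [part1 γ]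
    exact Finset.sum_congr rfl fun F _ => by rw [hQ]
  -- each det zero forces all Q F to vanish
  have hzero : ∀ γ, (ω γ).det = 0 → ∀ F, (Q F).eval γ = 0 := by
    intro γ h F
    have h1 : (∑ F : Fin n → ι, (‖(Q F).eval γ‖ ^ 2 : ℝ)) = 0 := by
      have := hdetQ γ
      rw [h] at this
      have h2 := congrArg Complex.re this.symm
      rw [Complex.re_sum] at h2
      simpa [← Complex.ofReal_pow] using h2
    have h3 := (Finset.sum_eq_zero_iff_of_nonneg
      (fun F _ => by positivity : ∀ F ∈ Finset.univ, (0:ℝ) ≤ ‖(Q F).eval γ‖ ^ 2)).1 h1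
    have h4 := h3 F (Finset.mem_univ F)
    have : ‖(Q F).eval γ‖ = 0 := by nlinarith [norm_nonneg ((Q F).eval γ)]
    simpa using this
  -- find a nonvanishing Q at γ₀
  have hex : ∃ F₀ : Fin n → ι, (Q F₀).eval γ₀ ≠ 0 := by
    by_contra hcon
    push_neg at hcon
    have : (ω γ₀).det = 0 := by
      rw [hdetQ γ₀]
      simp [hcon]
    rw [this] at h₀
    simp at h₀
  obtain ⟨F₀, hF₀⟩ := hex
  have hQne : Q F₀ ≠ 0 := fun h => hF₀ (by rw [h]; simp)
  have hdiv : ∀ γ, (ω γ).det = 0 → (Q F₀).eval γ = 0 := fun γ h => hzero γ h F₀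
  refine ⟨⟨Q F₀, hQne, hdiv⟩, ?_⟩
  intro γ hγ
  set s : Finset ℂ := (Q F₀).roots.toFinset.erase γ with hs
  have hmem : ∀ γ', (ω γ').det = 0 → γ' ≠ γ → γ' ∈ s := by
    intro γ' h hne
    refine Finset.mem_erase.2 ⟨hne, Multiset.mem_toFinset.2 ?_⟩
    rw [Polynomial.mem_roots hQne]
    exact hdiv γ' h
  by_cases hsne : s.Nonempty
  · refine ⟨s.inf' hsne (fun z => ‖z - γ‖), ?_, ?_⟩
    · rw [gt_iff_lt, Finset.lt_inf'_iff]
      intro z hz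
      have hzne : z ≠ γ := (Finset.mem_erase.1 hz).1
      exact norm_pos_iff.2 (sub_ne_zero.2 hzne)
    · intro γ' hne habs hdet0
      have h1 : γ' ∈ s := hmem γ' hdet0 hne
      have h2 := Finset.inf'_le (fun z => ‖z - γ‖) h1
      exact absurd habs (not_lt.2 h2)
  · refine ⟨1, one_pos, ?_⟩
    intro γ' hne _ hdet0
    exact hsne ⟨γ', hmem γ' hdet0 hne⟩
end

section
/- The set of primitive completely positive maps of fixed Kraus rank r on M_D(ℂ) is a relatively open subset of the set of all CP maps of Kraus rank r: if T is primitive with Kraus rank r, then every CP map of Kraus rank r sufficiently close to T (in any norm on the space of linear maps) is also primitive. -/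
open Matrix

/-- The Choi matrix of a linear map on `M_D(ℂ)`. -/
def choiMatrix {D : ℕ} (T : Module.End ℂ (Matrix (Fin D) (Fin D) ℂ)) :
    Matrix (Fin D × Fin D) (Fin D × Fin D) ℂ :=
  Matrix.of fun p q => T (Matrix.single p.2 q.2 1) p.1 q.1

/-- Complete positivity: `T` admits a Kraus representation. -/
def IsCPMap {D : ℕ} (T : Module.End ℂ (Matrix (Fin D) (Fin D) ℂ)) : Prop :=
  ∃ (r : ℕ) (A : Fin r → Matrix (Fin D) (Fin D) ℂ), ∀ X, T X = ∑ i, A i * X * (A i)ᴴ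

/-- Primitivity: some power of `T` has full Kraus rank `D²`. -/
def IsPrimitive {D : ℕ} (T : Module.End ℂ (Matrix (Fin D) (Fin D) ℂ)) : Prop :=
  ∃ n : ℕ, (choiMatrix (T ^ n)).rank = D ^ 2

namespace PrimAux

variable {D : ℕ}

/-- Reshuffling of indices, an involution on matrices indexed by pairs. -/
def resh (M : Matrix (Fin D × Fin D) (Fin D × Fin D) ℂ) :
    Matrix (Fin D × Fin D) (Fin D × Fin D) ℂ :=
  Matrix.of fun p q => M (p.1, q.1) (p.2, q.2)

/-- The natural (multiplicative) matrix representation of an endomorphism. -/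
def toMat (S : Module.End ℂ (Matrix (Fin D) (Fin D) ℂ)) :
    Matrix (Fin D × Fin D) (Fin D × Fin D) ℂ :=
  Matrix.of fun p q => S (Matrix.single q.1 q.2 1) p.1 p.2

lemma resh_choi (S : Module.End ℂ (Matrix (Fin D) (Fin D) ℂ)) :
    resh (choiMatrix S) = toMat S := rfl

lemma resh_toMat (S : Module.End ℂ (Matrix (Fin D) (Fin D) ℂ)) :
    resh (toMat S) = choiMatrix S := rfl

lemma toMat_one : toMat (1 : Module.End ℂ (Matrix (Fin D) (Fin D) ℂ)) = 1 := by
  ext p q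
  simp only [toMat, Matrix.of_apply, Module.End.one_apply, Matrix.one_apply,
    Matrix.single, Matrix.of_apply]
  by_cases h : p = q
  · subst h; simp
  · rw [if_neg h, if_neg]
    rintro ⟨h1, h2⟩
    exact h (Prod.ext h1.symm h2.symm)

lemma toMat_mul (S T : Module.End ℂ (Matrix (Fin D) (Fin D) ℂ)) :
    toMat (S * T) = toMat S * toMat T := by
  ext p q
  have hX : T (Matrix.single q.1 q.2 1)
      = ∑ k : Fin D × Fin D, (T (Matrix.single q.1 q.2 1)) k.1 k.2
          • Matrix.single k.1 k.2 (1:ℂ) := by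
    conv_lhs => rw [Matrix.matrix_eq_sum_single (T (Matrix.single q.1 q.2 1))]
    rw [Fintype.sum_prod_type]
    refine Finset.sum_congr rfl fun i _ => Finset.sum_congr rfl fun j _ => ?_
    rw [Matrix.smul_single, smul_eq_mul, mul_one]
  show (S (T (Matrix.single q.1 q.2 1))) p.1 p.2 = _
  rw [hX, map_sum]
  simp only [_root_.map_smul, Matrix.sum_apply, Matrix.smul_apply, smul_eq_mul, Matrix.mul_apply]
  refine Finset.sum_congr rfl fun k _ => ?_
  simp only [toMat, Matrix.of_apply]
  ring

lemma toMat_pow (S : Module.End ℂ (Matrix (Fin D) (Fin D) ℂ)) (n : ℕ) :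
    toMat (S ^ n) = (toMat S) ^ n := by
  induction n with
  | zero => simpa using toMat_one
  | succ m ih => rw [pow_succ, pow_succ, toMat_mul, ih]

lemma rank_eq_card_iff_det (A : Matrix (Fin D × Fin D) (Fin D × Fin D) ℂ) :
    A.rank = D ^ 2 ↔ A.det ≠ 0 := by
  have hcard : Fintype.card (Fin D × Fin D) = D ^ 2 := by
    simp [Fintype.card_prod, sq]
  constructor
  · intro h hdet
    obtain ⟨v, hv, hv0⟩ := (Matrix.exists_mulVec_eq_zero_iff.mpr hdet)
    have hrange : LinearMap.range A.mulVecLin = ⊤ := by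
      apply Submodule.eq_top_of_finrank_eq
      rw [← Matrix.rank, h, Module.finrank_pi, hcard]
    have hsurj : Function.Surjective A.mulVecLin := LinearMap.range_eq_top.mp hrange
    have hinj : Function.Injective A.mulVecLin :=
      (LinearMap.injective_iff_surjective).mpr hsurj
    apply hv
    have : A.mulVecLin v = A.mulVecLin 0 := by
      simpa [Matrix.mulVecLin_apply] using hv0
    exact hinj this
  · intro hdet
    have : IsUnit A := (Matrix.isUnit_iff_isUnit_det A).mpr (isUnit_iff_ne_zero.mpr hdet)
    rw [Matrix.rank_of_isUnit A this, hcard]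

lemma resh_continuous : Continuous (resh (D := D)) :=
  continuous_matrix fun p q =>
    (continuous_apply (p.2, q.2)).comp (continuous_apply (p.1, q.1))

end PrimAux

/-- The primitive CP maps of fixed Kraus rank `r` form a relatively open subset of the CP
maps of Kraus rank `r`: every CP map of Kraus rank `r` sufficiently close (entrywise on
the level of the maps, equivalently in any norm) to a primitive one is itself primitive. -/
theorem primitive_relatively_open (D r : ℕ) (hD : 2 ≤ D) (hr : 2 ≤ r)
    (T : Module.End ℂ (Matrix (Fin D) (Fin D) ℂ))
    (hTcp : IsCPMap T) (hTrank : (choiMatrix T).rank = r) (hTprim : IsPrimitive T) :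
    ∃ ε > (0:ℝ), ∀ S : Module.End ℂ (Matrix (Fin D) (Fin D) ℂ),
      IsCPMap S → (choiMatrix S).rank = r →
      (∀ p q, ‖choiMatrix S p q - choiMatrix T p q‖ < ε) →
      IsPrimitive S := by
  classical
  obtain ⟨n, hn⟩ := hTprim
  -- the determinant detector, as a function of the Choi matrix
  set g : Matrix (Fin D × Fin D) (Fin D × Fin D) ℂ → ℂ :=
    fun M => (PrimAux.resh ((PrimAux.resh M) ^ n)).det with hg
  have hg_eval : ∀ S : Module.End ℂ (Matrix (Fin D) (Fin D) ℂ),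
      g (choiMatrix S) = (choiMatrix (S ^ n)).det := by
    intro S
    rw [hg]
    simp only [PrimAux.resh_choi, ← PrimAux.toMat_pow, PrimAux.resh_toMat]
  have hcont : Continuous g := by
    apply Continuous.matrix_det
    exact PrimAux.resh_continuous.comp ((continuous_pow n).comp PrimAux.resh_continuous)
  -- move to the Pi type to use the sup metric
  set Φ : ((Fin D × Fin D) → (Fin D × Fin D) → ℂ) → ℂ :=
    fun f => g (Matrix.of f) with hΦdef
  have hΦcont : Continuous Φ := by
    refine hcont.comp ?_
    exact continuous_matrix fun i j => (continuous_apply j).comp (continuous_apply i)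
  have hΦT : Φ (fun p q => choiMatrix T p q) ≠ 0 := by
    have : Φ (fun p q => choiMatrix T p q) = g (choiMatrix T) := rfl
    rw [this, hg_eval]
    exact (PrimAux.rank_eq_card_iff_det _).mp hn
  have hopen : IsOpen (Φ ⁻¹' {(0:ℂ)}ᶜ) := (isOpen_compl_singleton).preimage hΦcont
  have hmem : (fun p q => choiMatrix T p q) ∈ Φ ⁻¹' {(0:ℂ)}ᶜ := hΦT
  obtain ⟨ε, hε, hball⟩ := Metric.isOpen_iff.mp hopen _ hmem
  refine ⟨ε, hε, fun S _ _ hclose => ?_⟩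
  have hdist : dist (fun p q => choiMatrix S p q) (fun p q => choiMatrix T p q) < ε := by
    rw [dist_pi_lt_iff hε]
    intro p
    rw [dist_pi_lt_iff hε]
    intro q
    rw [Complex.dist_eq]
    exact hclose p q
  have hSne : Φ (fun p q => choiMatrix S p q) ≠ 0 := hball (Metric.mem_ball.mpr hdist)
  have : g (choiMatrix S) ≠ 0 := hSne
  rw [hg_eval] at this
  exact ⟨n, (PrimAux.rank_eq_card_iff_det _).mpr this⟩
end

section
/- The set of primitive CP maps of fixed Kraus rank r is dense in the set of all CP maps of Kraus rank r on M_D(ℂ), for r, D ≥ 2. -/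
open Matrix

namespace PrimitiveDense

open Polynomial ComplexOrder

variable {D : ℕ}

/-! ### Kraus maps and their Choi matrices -/

noncomputable def krausMap {ι : Type*} [Fintype ι] (A : ι → Matrix (Fin D) (Fin D) ℂ) :
    Module.End ℂ (Matrix (Fin D) (Fin D) ℂ) where
  toFun X := ∑ i, A i * X * (A i)ᴴ
  map_add' X Y := by simp [Matrix.mul_add, Matrix.add_mul, Finset.sum_add_distrib]
  map_smul' c X := by simp [Matrix.mul_smul, Matrix.smul_mul, Finset.smul_sum]

lemma krausMap_apply {ι : Type*} [Fintype ι] (A : ι → Matrix (Fin D) (Fin D) ℂ) (X) :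
    krausMap A X = ∑ i, A i * X * (A i)ᴴ := rfl

lemma choi_krausMap {ι : Type*} [Fintype ι] (A : ι → Matrix (Fin D) (Fin D) ℂ) (p q) :
    choiMatrix (krausMap A) p q = ∑ i, A i p.1 p.2 * (starRingEnd ℂ) (A i q.1 q.2) := by
  simp only [choiMatrix, Matrix.of_apply, krausMap_apply, Matrix.sum_apply]
  refine Finset.sum_congr rfl fun i _ => ?_
  simp [Matrix.mul_apply, Matrix.single, Matrix.conjTranspose_apply, ite_and,
    Finset.sum_ite_eq, Finset.mul_sum, mul_comm, mul_left_comm]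

lemma choi_inj {S T : Module.End ℂ (Matrix (Fin D) (Fin D) ℂ)}
    (h : choiMatrix S = choiMatrix T) : S = T := by
  refine LinearMap.ext fun X => ?_
  have hb : ∀ a b, S (Matrix.single a b (1:ℂ)) = T (Matrix.single a b 1) := by
    intro a b; ext x y
    have := congrFun (congrFun h (x, a)) (y, b)
    simpa [choiMatrix] using this
  have hc : ∀ a b (c : ℂ), S (Matrix.single a b c) = T (Matrix.single a b c) := by
    intro a b c
    rw [show Matrix.single a b c = c • Matrix.single a b 1 by
      simp [Matrix.smul_single], LinearMap.map_smul, LinearMap.map_smul, hb]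
  rw [Matrix.matrix_eq_sum_single X]
  simp only [map_sum, hc]

/-! ### Word products -/

def wprod {ι : Type*} {α : Type*} [CommRing α]
    (F : ι → Matrix (Fin D) (Fin D) α) :
    ∀ {n : ℕ}, (Fin n → ι) → Matrix (Fin D) (Fin D) α
  | 0, _ => 1
  | _ + 1, w => F (w 0) * wprod F (w ∘ Fin.succ)

lemma wprod_cons {ι α : Type*} [CommRing α] (F : ι → Matrix (Fin D) (Fin D) α)
    {n : ℕ} (i : ι) (w : Fin n → ι) :
    wprod F (Fin.cons i w) = F i * wprod F w := by
  rw [wprod]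
  have h1 : Fin.cons (α := fun _ => ι) i w 0 = i := rfl
  have h2 : Fin.cons (α := fun _ => ι) i w ∘ Fin.succ = w := by
    funext k; simp [Fin.cons_succ]
  rw [h1, h2]

lemma wprod_map {ι α β : Type*} [CommRing α] [CommRing β]
    (f : α →+* β) (F : ι → Matrix (Fin D) (Fin D) α) :
    ∀ {n : ℕ} (w : Fin n → ι),
      (wprod F w).map f = wprod (fun i => (F i).map f) w
  | 0, w => by simp [wprod, Matrix.map_one f f.map_zero f.map_one]
  | n + 1, w => by
    simp [wprod, Matrix.map_mul, wprod_map f F (w ∘ Fin.succ)]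

lemma wprod_eq_list {ι α : Type*} [CommRing α] (F : ι → Matrix (Fin D) (Fin D) α) :
    ∀ {n : ℕ} (w : Fin n → ι), wprod F w = ((List.ofFn w).map F).prod
  | 0, w => by simp [wprod]
  | n + 1, w => by
    rw [wprod, wprod_eq_list F (w ∘ Fin.succ), List.ofFn_succ]
    simp
    rfl

lemma krausMap_pow {ι : Type*} [Fintype ι] (A : ι → Matrix (Fin D) (Fin D) ℂ) :
    ∀ n : ℕ, (krausMap A) ^ n = krausMap (fun w : Fin n → ι => wprod A w)
  | 0 => by
    refine LinearMap.ext fun X => ?_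
    simp [krausMap_apply, wprod, pow_zero]
  | n + 1 => by
    refine LinearMap.ext fun X => ?_
    rw [pow_succ', Module.End.mul_apply, krausMap_pow A n, krausMap_apply, krausMap_apply,
      krausMap_apply]
    rw [← Equiv.sum_comp (Fin.consEquiv (fun _ : Fin (n+1) => ι))
      (fun w : Fin (n+1) → ι => wprod A w * X * (wprod A w)ᴴ)]
    rw [Fintype.sum_prod_type]
    refine Finset.sum_congr rfl fun i _ => ?_
    rw [Matrix.mul_sum, Matrix.sum_mul]
    refine Finset.sum_congr rfl fun w _ => ?_
    have : (Fin.consEquiv fun _ : Fin (n+1) => ι) (i, w) = Fin.cons i w := rfl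
    rw [this, wprod_cons, conjTranspose_mul]
    noncomm_ring

/-! ### Rank lemmas -/

lemma rank_eq_card_iff_det {m : Type*} [Fintype m] [DecidableEq m] (N : Matrix m m ℂ) :
    N.rank = Fintype.card m ↔ N.det ≠ 0 := by
  rw [← isUnit_iff_ne_zero, ← Matrix.isUnit_iff_isUnit_det]
  constructor
  · intro h
    rw [← Matrix.mulVec_surjective_iff_isUnit]
    have hr : Module.finrank ℂ (LinearMap.range N.mulVecLin) = Fintype.card m := h
    have htop : LinearMap.range N.mulVecLin = ⊤ := by
      apply Submodule.eq_top_of_finrank_eq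
      rw [hr, Module.finrank_fintype_fun_eq_card]
    intro v
    have hv : v ∈ LinearMap.range N.mulVecLin := htop ▸ Submodule.mem_top
    exact hv
  · exact fun h => Matrix.rank_of_isUnit N h

def vecM {ι : Type*} (F : ι → Matrix (Fin D) (Fin D) ℂ) :
    Matrix (Fin D × Fin D) ι ℂ :=
  Matrix.of fun p i => F i p.1 p.2

lemma choi_eq_vecM {ι : Type*} [Fintype ι] (F : ι → Matrix (Fin D) (Fin D) ℂ) :
    choiMatrix (krausMap F) = vecM F * (vecM F)ᴴ := by
  ext p q
  rw [choi_krausMap, Matrix.mul_apply]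
  refine Finset.sum_congr rfl fun i _ => ?_
  rw [Matrix.conjTranspose_apply]
  rfl

lemma rank_ctm {m n : Type*} [Fintype m] [Fintype n] (M : Matrix m n ℂ) :
    (Mᴴ * M).rank = M.rank :=
  Matrix.rank_conjTranspose_mul_self M

lemma rank_choi_krausMap {ι : Type*} [Fintype ι] (F : ι → Matrix (Fin D) (Fin D) ℂ) :
    (choiMatrix (krausMap F)).rank = (vecM F).rank := by
  rw [choi_eq_vecM, Matrix.rank_self_mul_conjTranspose]

lemma span_top_rank {ι : Type*} [Fintype ι] (F : ι → Matrix (Fin D) (Fin D) ℂ)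
    (h : ∀ i j : Fin D, ∃ w : ι, F w = Matrix.single i j 1) :
    (vecM F).rank = D ^ 2 := by
  rw [Matrix.rank_eq_finrank_span_cols]
  have htop : Submodule.span ℂ (Set.range (vecM F)ᵀ) = ⊤ := by
    rw [Submodule.eq_top_iff']
    intro v
    have hv : v = ∑ p : Fin D × Fin D, v p • (Pi.single p (1 : ℂ) : Fin D × Fin D → ℂ) := by
      funext q
      simp [Finset.sum_apply, Pi.single_apply, mul_comm]
    rw [hv]
    refine Submodule.sum_mem _ fun p _ => Submodule.smul_mem _ _ ?_
    refine Submodule.subset_span ?_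
    obtain ⟨w, hw⟩ := h p.1 p.2
    refine ⟨w, ?_⟩
    funext q
    simp only [Matrix.transpose_apply, vecM, Matrix.of_apply, hw, Matrix.single,
      Pi.single_apply, Prod.ext_iff]
    obtain ⟨a, b⟩ := q
    obtain ⟨c, d⟩ := p
    by_cases h1 : c = a <;> by_cases h2 : d = b <;>
      simp [Matrix.of_apply, h1, h2, Prod.ext_iff, eq_comm] <;>
      grind
  rw [show (vecM F).col = (vecM F)ᵀ from rfl, htop]
  rw [finrank_top, Module.finrank_fintype_fun_eq_card]
  simp [sq]

/-! ### Extraction of a Kraus family of size `r` from a CP map of Choi rank `r` -/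

lemma psd_decomp {m : Type*} [Fintype m] [DecidableEq m] {N : Matrix m m ℂ}
    (hN : N.PosSemidef) {r : ℕ} (hrank : N.rank = r) :
    ∃ w : Fin r → m → ℂ, ∀ p q, N p q = ∑ k, w k p * (starRingEnd ℂ) (w k q) := by
  have hH : N.IsHermitian := hN.1
  have hspec := hH.spectral_theorem
  have hcard : Fintype.card {j // hH.eigenvalues j ≠ 0} = r := by
    rw [← hH.rank_eq_card_non_zero_eigs, hrank]
  let e : Fin r ≃ {j // hH.eigenvalues j ≠ 0} :=
    (Fintype.equivFinOfCardEq hcard).symm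
  set U : Matrix m m ℂ := (hH.eigenvectorUnitary : Matrix m m ℂ) with hU
  set lam := hH.eigenvalues with hlam
  refine ⟨fun k p => (Real.sqrt (lam (e k)) : ℂ) * U p (e k), fun p q => ?_⟩
  set f : m → ℂ := fun j => U p j * (lam j : ℂ) * (starRingEnd ℂ) (U q j) with hf
  have hentry : N p q = ∑ j, f j := by
    conv_lhs => rw [hspec, Unitary.conjStarAlgAut_apply]
    rw [Matrix.mul_apply]
    refine Finset.sum_congr rfl fun j _ => ?_
    rw [Matrix.mul_diagonal, Matrix.star_eq_conjTranspose, Matrix.conjTranspose_apply]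
    rfl
  rw [hentry]
  have h0 : ∑ j, f j = ∑ j ∈ Finset.univ.filter fun j => lam j ≠ 0, f j := by
    refine (Finset.sum_filter_of_ne fun j _ hne => ?_).symm
    intro h0
    apply hne
    simp [hf, h0]
  have h1 : ∑ j ∈ Finset.univ.filter fun j => lam j ≠ 0, f j
      = ∑ j : {j // lam j ≠ 0}, f j :=
    Finset.sum_subtype _ (by simp) f
  have h2 : ∑ j : {j // lam j ≠ 0}, f j = ∑ k : Fin r, f (e k) :=
    (Equiv.sum_comp e (fun j => f ↑j)).symm
  rw [h0, h1, h2]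
  refine Finset.sum_congr rfl fun k _ => ?_
  have hnn : 0 ≤ lam (e k) := hN.eigenvalues_nonneg _
  have hs : ((Real.sqrt (lam (e k)) : ℂ)) * (Real.sqrt (lam (e k)) : ℂ)
      = (lam (e k) : ℂ) := by
    rw [← Complex.ofReal_mul, Real.mul_self_sqrt hnn]
  simp only []
  rw [_root_.map_mul, Complex.conj_ofReal]
  simp only [hf]
  rw [← hs]
  ring

lemma exists_kraus_family {r : ℕ} {T : Module.End ℂ (Matrix (Fin D) (Fin D) ℂ)}
    (hTcp : IsCPMap T) (hTrank : (choiMatrix T).rank = r) :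
    ∃ A : Fin r → Matrix (Fin D) (Fin D) ℂ, T = krausMap A := by
  obtain ⟨n, A0, hA0⟩ := hTcp
  have hT0 : T = krausMap A0 := LinearMap.ext fun X => hA0 X
  have hpsd : (choiMatrix T).PosSemidef := by
    rw [hT0, choi_eq_vecM]
    exact Matrix.posSemidef_self_mul_conjTranspose _
  obtain ⟨w, hw⟩ := psd_decomp hpsd hTrank
  refine ⟨fun k => Matrix.of fun i j => w k (i, j), ?_⟩
  apply choi_inj
  ext p q
  rw [choi_krausMap, hw p q]
  exact Finset.sum_congr rfl fun k _ => by simp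

/-! ### A primitive word family -/

section Shift
variable [NeZero D]
open Fin.NatCast

noncomputable def shiftM (D : ℕ) [NeZero D] : Matrix (Fin D) (Fin D) ℂ :=
  Matrix.of fun x y => if x = y + 1 then 1 else 0

lemma shift_mul_std (c d : Fin D) :
    shiftM D * Matrix.single c d (1:ℂ) = Matrix.single (c + 1) d 1 := by
  ext x y
  rw [Matrix.mul_apply]
  simp only [shiftM, Matrix.of_apply, Matrix.single, Matrix.of_apply]
  rw [Finset.sum_eq_single c]
  · by_cases h1 : x = c + 1 <;> by_cases h2 : d = y <;>
      simp [h1, h2, eq_comm (a := x) (b := c + 1)]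
    all_goals exact fun hh => h1 hh.symm
  · intro k _ hk
    simp [Ne.symm hk]
  · simp

lemma std_mul_shift (c d : Fin D) :
    Matrix.single c d (1:ℂ) * shiftM D = Matrix.single c (d - 1) 1 := by
  ext x y
  rw [Matrix.mul_apply]
  simp only [shiftM, Matrix.of_apply, Matrix.single, Matrix.of_apply]
  rw [Finset.sum_eq_single d]
  · by_cases h1 : c = x <;> by_cases h2 : d = y + 1 <;>
      simp [h1, h2, sub_eq_iff_eq_add]
  · intro k _ hk
    simp [Ne.symm hk]
  · simp

lemma shiftpow_mul_std (a : ℕ) (c d : Fin D) :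
    shiftM D ^ a * Matrix.single c d (1:ℂ) = Matrix.single (c + (a : Fin D)) d 1 := by
  induction a with
  | zero => simp
  | succ a ih =>
    rw [pow_succ', mul_assoc, ih, shift_mul_std]
    have : (c : Fin D) + (a + 1 : ℕ) = c + (a : ℕ) + 1 := by push_cast; abel
    rw [this]

lemma std_mul_shiftpow (b : ℕ) (c d : Fin D) :
    Matrix.single c d (1:ℂ) * shiftM D ^ b = Matrix.single c (d - (b : Fin D)) 1 := by
  induction b with
  | zero => simp
  | succ b ih =>
    rw [pow_succ, ← mul_assoc, ih, std_mul_shift]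
    have : (d : Fin D) - (b + 1 : ℕ) = d - (b : ℕ) - 1 := by push_cast; abel
    rw [this]

lemma e00_pow (m : ℕ) (hm : 1 ≤ m) :
    (Matrix.single (0 : Fin D) (0 : Fin D) (1:ℂ)) ^ m
      = Matrix.single (0 : Fin D) (0 : Fin D) (1:ℂ) := by
  induction m with
  | zero => omega
  | succ m ih =>
    rcases Nat.eq_or_lt_of_le hm with h | h
    · rw [← h, pow_one]
    · rw [pow_succ, ih (by omega), Matrix.single_mul_single_same, one_mul]

noncomputable def Bfam (D r : ℕ) [NeZero D] : Fin r → Matrix (Fin D) (Fin D) ℂ :=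
  fun k => if (k : ℕ) = 0 then shiftM D
    else if (k : ℕ) = 1 then Matrix.single 0 0 1 else 0

lemma exists_word (D r : ℕ) [NeZero D] (hr : 2 ≤ r) (i j : Fin D) :
    ∃ w : Fin (2 * D - 1) → Fin r,
      wprod (Bfam D r) w = Matrix.single i j 1 := by
  have hD : 1 ≤ D := Nat.one_le_iff_ne_zero.mpr (NeZero.ne D)
  set a := (i : ℕ) with ha
  set b := ((-j : Fin D) : ℕ) with hb
  have hai : a < D := i.isLt
  have hbi : b < D := (-j).isLt
  set N := 2 * D - 1 with hN
  set m := N - a - b with hm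
  have hm1 : 1 ≤ m := by omega
  have habm : a + m + b = N := by omega
  set z0 : Fin r := ⟨0, by omega⟩ with hz0
  set z1 : Fin r := ⟨1, by omega⟩ with hz1
  set l : List (Fin r) :=
    List.replicate a z0 ++ List.replicate m z1 ++ List.replicate b z0 with hl
  have hlen : l.length = N := by simp [hl]; omega
  refine ⟨fun k => l.get (Fin.cast hlen.symm k), ?_⟩
  have hofn : List.ofFn (fun k : Fin N => l.get (Fin.cast hlen.symm k)) = l := by
    apply List.ext_getElem
    · simp [hlen]
    · intro n h1 h2
      simp
  rw [wprod_eq_list, hofn, hl]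
  rw [List.map_append, List.map_append, List.prod_append, List.prod_append]
  simp only [List.map_replicate, List.prod_replicate]
  have hB0 : Bfam D r z0 = shiftM D := by simp [Bfam, hz0]
  have hB1 : Bfam D r z1 = Matrix.single 0 0 1 := by simp [Bfam, hz1]
  rw [hB0, hB1, e00_pow m hm1, shiftpow_mul_std a 0 0, std_mul_shiftpow b ((0 : Fin D) + ((a : ℕ) : Fin D)) 0]
  rw [show ((0 : Fin D) + (a : ℕ)) = i from by rw [zero_add, ha, Fin.cast_val_eq_self],
    show ((0 : Fin D) - (b : ℕ)) = j from by
      rw [zero_sub, hb, Fin.cast_val_eq_self, neg_neg]]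

end Shift

/-! ### Polynomial interpolation of Kraus families -/

section Poly

variable {r : ℕ}

noncomputable def ev (t : ℝ) : Polynomial ℂ →+* ℂ := Polynomial.evalRingHom ((t : ℂ))

noncomputable def interpP (A B : Fin r → Matrix (Fin D) (Fin D) ℂ) (i : Fin r) :
    Matrix (Fin D) (Fin D) (Polynomial ℂ) :=
  (A i).map Polynomial.C + (Polynomial.X : Polynomial ℂ) • ((B i - A i).map Polynomial.C)

noncomputable def interpPc (A B : Fin r → Matrix (Fin D) (Fin D) ℂ) (i : Fin r) :
    Matrix (Fin D) (Fin D) (Polynomial ℂ) :=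
  (interpP A B i).map (Polynomial.mapRingHom (starRingEnd ℂ))

noncomputable def At (A B : Fin r → Matrix (Fin D) (Fin D) ℂ) (t : ℝ) (i : Fin r) :
    Matrix (Fin D) (Fin D) ℂ :=
  A i + ((t : ℂ)) • (B i - A i)

lemma interpP_eval (A B : Fin r → Matrix (Fin D) (Fin D) ℂ) (t : ℝ) (i : Fin r) :
    (interpP A B i).map (ev t) = At A B t i := by
  ext x y
  simp [interpP, At, ev, Matrix.map_apply, Matrix.add_apply, Matrix.smul_apply,
    Matrix.sub_apply, smul_eq_mul, mul_comm]

lemma conj_eval (t : ℝ) (p : Polynomial ℂ) :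
    (ev t) (p.map (starRingEnd ℂ)) = (starRingEnd ℂ) ((ev t) p) := by
  induction p using Polynomial.induction_on' with
  | add p q hp hq => simp [hp, hq]
  | monomial n a =>
    simp [ev, Polynomial.map_monomial, Polynomial.eval_monomial, ← Complex.ofReal_pow]

lemma interpPc_eval (A B : Fin r → Matrix (Fin D) (Fin D) ℂ) (t : ℝ) (i : Fin r) :
    (interpPc A B i).map (ev t) = (At A B t i).map (starRingEnd ℂ) := by
  ext x y
  have h1 : (At A B t i) x y = ((interpP A B i).map (ev t)) x y := by
    rw [interpP_eval]
  simp only [interpPc, Matrix.map_apply, h1]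
  exact conj_eval t _

noncomputable def choiP (A B : Fin r → Matrix (Fin D) (Fin D) ℂ) (n : ℕ) :
    Matrix (Fin D × Fin D) (Fin D × Fin D) (Polynomial ℂ) :=
  Matrix.of fun p q => ∑ w : Fin n → Fin r,
    (wprod (interpP A B) w) p.1 p.2 * (wprod (interpPc A B) w) q.1 q.2

lemma choiP_eval (A B : Fin r → Matrix (Fin D) (Fin D) ℂ) (t : ℝ) (n : ℕ) :
    (choiP A B n).map (ev t) = choiMatrix ((krausMap (At A B t)) ^ n) := by
  ext p q
  rw [krausMap_pow, choi_krausMap]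
  simp only [choiP, Matrix.map_apply, Matrix.of_apply, map_sum, _root_.map_mul]
  refine Finset.sum_congr rfl fun w _ => ?_
  have h1 : (ev t) ((wprod (interpP A B) w) p.1 p.2) = (wprod (At A B t) w) p.1 p.2 := by
    have : ((wprod (interpP A B) w).map (ev t)) p.1 p.2
        = (wprod (fun i => (interpP A B i).map (ev t)) w) p.1 p.2 := by
      rw [wprod_map]
    simp only [Matrix.map_apply] at this
    rw [this]
    congr 1
    funext i
    rw [interpP_eval]
  have h2 : (ev t) ((wprod (interpPc A B) w) q.1 q.2)
      = (starRingEnd ℂ) ((wprod (At A B t) w) q.1 q.2) := by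
    have e1 : ((wprod (interpPc A B) w).map (ev t)) q.1 q.2
        = (wprod (fun i => (interpPc A B i).map (ev t)) w) q.1 q.2 := by
      rw [wprod_map]
    simp only [Matrix.map_apply] at e1
    rw [e1]
    have e2 : (fun i => (interpPc A B i).map (ev t))
        = fun i => (At A B t i).map (starRingEnd ℂ) := by
      funext i
      rw [interpPc_eval]
    rw [e2]
    have e3 : wprod (fun i => (At A B t i).map (starRingEnd ℂ)) w
        = (wprod (At A B t) w).map (starRingEnd ℂ) := by
      rw [wprod_map]
    rw [e3]
    rfl
  rw [h1, h2]

noncomputable def gramP (A B : Fin r → Matrix (Fin D) (Fin D) ℂ) :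
    Matrix (Fin r) (Fin r) (Polynomial ℂ) :=
  Matrix.of fun k l => ∑ p : Fin D × Fin D,
    (interpPc A B k) p.1 p.2 * (interpP A B l) p.1 p.2

lemma gramP_eval (A B : Fin r → Matrix (Fin D) (Fin D) ℂ) (t : ℝ) :
    (gramP A B).map (ev t) = (vecM (At A B t))ᴴ * vecM (At A B t) := by
  ext k l
  simp only [gramP, Matrix.map_apply, Matrix.of_apply, map_sum, _root_.map_mul,
    Matrix.mul_apply, Matrix.conjTranspose_apply]
  refine Finset.sum_congr rfl fun p _ => ?_
  have h1 := congrFun (congrFun (interpPc_eval A B t k) p.1) p.2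
  have h2 := congrFun (congrFun (interpP_eval A B t l) p.1) p.2
  simp only [Matrix.map_apply] at h1 h2
  rw [h1, h2]
  simp [vecM]

end Poly

end PrimitiveDense

open PrimitiveDense

/-- The primitive CP maps of Kraus rank `r` are dense in the CP maps of Kraus rank `r` on
`M_D(ℂ)`, for `r, D ≥ 2`: arbitrarily close (entrywise, equivalently in any norm) to any
CP map of Kraus rank `r` there is a primitive CP map of Kraus rank `r`. -/
theorem primitive_dense_in_cp_fixed_rank (D r : ℕ) (hD : 2 ≤ D) (hr : 2 ≤ r)
    (T : Module.End ℂ (Matrix (Fin D) (Fin D) ℂ))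
    (hTcp : IsCPMap T) (hTrank : (choiMatrix T).rank = r) :
    ∀ ε > (0:ℝ), ∃ S : Module.End ℂ (Matrix (Fin D) (Fin D) ℂ),
      IsCPMap S ∧ (choiMatrix S).rank = r ∧ IsPrimitive S ∧
      (∀ p q, ‖choiMatrix S p q - choiMatrix T p q‖ < ε) := by
  intro ε hε
  haveI : NeZero D := ⟨by omega⟩
  obtain ⟨A, hTA⟩ := exists_kraus_family hTcp hTrank
  set B := Bfam D r with hB
  set N := 2 * D - 1 with hN
  set d1 : Polynomial ℂ := (choiP A B N).det with hd1
  set d2 : Polynomial ℂ := (gramP A B).det with hd2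
  have hAt1 : At A B 1 = B := by funext i; simp [At]
  have hAt0 : At A B 0 = A := by funext i; simp [At]
  have hcardDD : Fintype.card (Fin D × Fin D) = D ^ 2 := by simp [sq]
  have hdet1 : ∀ t : ℝ, (ev t) d1 = (choiMatrix ((krausMap (At A B t)) ^ N)).det := by
    intro t
    rw [hd1, RingHom.map_det, RingHom.mapMatrix_apply, choiP_eval A B t N]
  have hdet2 : ∀ t : ℝ, (ev t) d2 = ((vecM (At A B t))ᴴ * vecM (At A B t)).det := by
    intro t
    rw [hd2, RingHom.map_det, RingHom.mapMatrix_apply, gramP_eval A B t]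
  have h11 : (ev 1) d1 ≠ 0 := by
    rw [hdet1 1, hAt1]
    have hrank : (choiMatrix ((krausMap B) ^ N)).rank = Fintype.card (Fin D × Fin D) := by
      rw [krausMap_pow, rank_choi_krausMap, hcardDD]
      exact span_top_rank _ (fun i j => exists_word D r hr i j)
    exact (rank_eq_card_iff_det _).1 hrank
  have h20 : (ev 0) d2 ≠ 0 := by
    rw [hdet2 0, hAt0]
    have hrankA : (vecM A).rank = r := by
      have h := rank_choi_krausMap A
      rw [← hTA, hTrank] at h
      exact h.symm
    refine (rank_eq_card_iff_det _).1 ?_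
    rw [rank_ctm, hrankA, Fintype.card_fin]
  have hd1nz : d1 ≠ 0 := fun h => h11 (by rw [h]; simp)
  have hd2nz : d2 ≠ 0 := fun h => h20 (by rw [h]; simp)
  have hd12 : d1 * d2 ≠ 0 := mul_ne_zero hd1nz hd2nz
  have hbad : {t : ℝ | (ev t) d1 = 0 ∨ (ev t) d2 = 0}.Finite := by
    have hsub : {t : ℝ | (ev t) d1 = 0 ∨ (ev t) d2 = 0}
        ⊆ Complex.ofReal ⁻¹' ((d1 * d2).roots.toFinset : Set ℂ) := by
      intro t ht
      simp only [Set.mem_preimage, Finset.coe_sort_coe, Multiset.mem_toFinset,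
        Polynomial.mem_roots hd12, Polynomial.IsRoot, Finset.mem_coe]
      rcases ht with h | h
      · rw [Polynomial.eval_mul]
        exact mul_eq_zero_of_left h _
      · rw [Polynomial.eval_mul]
        exact mul_eq_zero_of_right _ h
    exact ((Multiset.finite_toSet (d1 * d2).roots).preimage
      (Set.injOn_of_injective Complex.ofReal_injective)).subset
      (fun t ht => Multiset.mem_toFinset.mp (hsub ht))
  set f : (Fin D × Fin D) × (Fin D × Fin D) → ℝ → ℂ :=
    fun pq t => Polynomial.eval ((t : ℂ)) ((choiP A B 1) pq.1 pq.2) with hfdef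
  have hcont : ∀ pq, Continuous (f pq) := fun pq =>
    (Polynomial.continuous _).comp Complex.continuous_ofReal
  have hev : ∀ᶠ t in nhds (0:ℝ), ∀ pq, ‖f pq t - f pq 0‖ < ε := by
    rw [Filter.eventually_all]
    intro pq
    have h1 := Metric.tendsto_nhds.mp ((hcont pq).tendsto 0) ε hε
    simpa [Complex.dist_eq] using h1
  obtain ⟨δ, hδpos, hδ⟩ := Metric.eventually_nhds_iff.mp hev
  obtain ⟨t, ht⟩ := ((Set.Ioo_infinite hδpos).diff hbad).nonempty
  have htIoo : t ∈ Set.Ioo (0:ℝ) δ := ht.1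
  have htdist : dist t 0 < δ := by
    rw [Real.dist_eq, sub_zero, abs_of_pos htIoo.1]
    exact htIoo.2
  have htgood := ht.2
  simp only [Set.mem_setOf_eq, not_or] at htgood
  obtain ⟨ht1, ht2⟩ := htgood
  refine ⟨krausMap (At A B t), ⟨r, At A B t, fun X => rfl⟩, ?_, ⟨N, ?_⟩, ?_⟩
  · -- rank = r
    rw [rank_choi_krausMap, ← rank_ctm]
    have : ((vecM (At A B t))ᴴ * vecM (At A B t)).rank = Fintype.card (Fin r) :=
      (rank_eq_card_iff_det _).2 (by rw [← hdet2 t]; exact ht2)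
    rw [this, Fintype.card_fin]
  · -- primitivity
    rw [← hcardDD]
    refine (rank_eq_card_iff_det _).2 ?_
    rw [← hdet1 t]
    exact ht1
  · -- closeness
    intro p q
    have hS : choiMatrix (krausMap (At A B t)) p q = f ((p, q)) t := by
      have := congrFun (congrFun (choiP_eval A B t 1) p) q
      rw [pow_one] at this
      rw [← this]
      rfl
    have hT : choiMatrix T p q = f ((p, q)) 0 := by
      have := congrFun (congrFun (choiP_eval A B 0 1) p) q
      rw [pow_one, hAt0, ← hTA] at this
      rw [← this]
      rfl
    rw [hS, hT]
    exact hδ htdist (p, q)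
end

section
/- Let T(X) = ∑_i A_i† X A_i be an irreducible unital CP map on M_D(ℂ) with peripheral eigenvalue β = e^{2πi/m} and unitary eigenvector U = ∑_{k=1}^m β^k P_k (spectral projectors P_k). Then the Kraus operators satisfy the intertwining relation A_i P_{k−1} = P_k A_i for all i and k (indices mod m). -/
open Matrix ComplexOrder

/-- Irreducibility: the spectral radius `μ` is a simple (algebraic multiplicity one)
eigenvalue with positive definite right and left eigenvectors. -/
def IsIrreducibleMap {D : ℕ} (T : Module.End ℂ (Matrix (Fin D) (Fin D) ℂ)) : Prop :=
  ∃ μ : ℝ, (μ : ℂ) ∈ spectrum ℂ T ∧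
    (∀ z ∈ spectrum ℂ T, ‖z‖ ≤ μ) ∧
    Module.finrank ℂ (T.maxGenEigenspace (μ : ℂ)) = 1 ∧
    (∃ ρ : Matrix (Fin D) (Fin D) ℂ, ρ.PosDef ∧ T ρ = (μ : ℂ) • ρ) ∧
    (∃ σ : Matrix (Fin D) (Fin D) ℂ, σ.PosDef ∧
      ∀ X, (σ * T X).trace = (μ : ℂ) * (σ * X).trace)

/-- If a finite sum of matrices of the form `Bᴴ * B` vanishes, each `B` vanishes. -/
lemma sum_conjTranspose_mul_self_eq_zero {n r : Type*} [Fintype n] [Fintype r]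
    (B : r → Matrix n n ℂ) (h : ∑ i, (B i)ᴴ * B i = 0) (i : r) : B i = 0 := by
  have hdiag : ∀ j : n, ∑ i, ((B i)ᴴ * B i) j j = 0 := by
    intro j
    have := congrFun (congrFun h j) j
    simpa [Matrix.sum_apply] using this
  have hrep : ∀ (i : r) (j : n),
      ((B i)ᴴ * B i) j j = dotProduct (star fun l => B i l j) (fun l => B i l j) := by
    intro i j
    simp [Matrix.mul_apply, dotProduct, Matrix.conjTranspose_apply]
  have hnn : ∀ (i : r) (j : n), (0:ℂ) ≤ ((B i)ᴴ * B i) j j := by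
    intro i j; rw [hrep]; exact dotProduct_star_self_nonneg _
  have hz : ∀ j : n, ((B i)ᴴ * B i) j j = 0 := fun j =>
    (Finset.sum_eq_zero_iff_of_nonneg (fun i _ => hnn i j)).mp (hdiag j) i (Finset.mem_univ i)
  ext l j
  have hv := dotProduct_star_self_eq_zero.mp ((hrep i j).symm.trans (hz j))
  simpa using congrFun hv l

/-- Let `T(X) = ∑ᵢ Aᵢ† X Aᵢ` be an irreducible unital CP map on `M_D(ℂ)` with peripheral
eigenvalue `β = e^{2πi/m}` and unitary eigenvector `U = ∑ₖ βᵏ Pₖ` (spectral projectors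
`Pₖ`). Then the Kraus operators satisfy `Aᵢ P_{k−1} = Pₖ Aᵢ` for all `i, k` (mod `m`). -/
theorem kraus_intertwining_relation (D r m : ℕ) [NeZero m] (hm : m ≤ D)
    (A : Fin r → Matrix (Fin D) (Fin D) ℂ)
    (T : Module.End ℂ (Matrix (Fin D) (Fin D) ℂ))
    (hT : ∀ X, T X = ∑ i, (A i)ᴴ * X * A i)
    (hUnital : T 1 = 1)
    (hIrr : IsIrreducibleMap T)
    (β : ℂ) (hβ : β = Complex.exp (2 * Real.pi * Complex.I / m))
    (U : Matrix (Fin D) (Fin D) ℂ) (hU : U ∈ Matrix.unitaryGroup (Fin D) ℂ)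
    (hEig : T U = β • U)
    (P : ZMod m → Matrix (Fin D) (Fin D) ℂ)
    (hHerm : ∀ k, (P k)ᴴ = P k)
    (hIdem : ∀ k, P k * P k = P k)
    (hOrth : ∀ k l, k ≠ l → P k * P l = 0)
    (hSum : ∑ k, P k = 1)
    (hSpec : U = ∑ k, β ^ (k.val) • P k) :
    ∀ (i : Fin r) (k : ZMod m), A i * P (k - 1) = P k * A i := by
  have hprim : IsPrimitiveRoot β m := hβ ▸ Complex.isPrimitiveRoot_exp m (NeZero.ne m)
  have hβm : β ^ m = 1 := hprim.pow_eq_one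
  have hnorm : ‖β‖ = 1 := Complex.norm_eq_one_of_pow_eq_one hβm (NeZero.ne m)
  have hcb : β * (starRingEnd ℂ) β = 1 := by
    rw [Complex.mul_conj]
    norm_cast
    rw [Complex.normSq_eq_norm_sq, hnorm]; norm_num
  have hUU : Uᴴ * U = 1 := by
    have := hU.1; simpa [Matrix.star_eq_conjTranspose] using this
  have hTU' : T Uᴴ = (starRingEnd ℂ) β • Uᴴ := by
    have h1 : T Uᴴ = (T U)ᴴ := by
      rw [hT, hT, Matrix.conjTranspose_sum]
      refine Finset.sum_congr rfl fun i _ => ?_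
      simp [Matrix.conjTranspose_mul, Matrix.mul_assoc]
    rw [h1, hEig, Matrix.conjTranspose_smul, RCLike.star_def]
  -- Step 1: the commutation relation `U Aᵢ = β Aᵢ U`.
  have hS : ∑ i, ((U * A i - β • (A i * U))ᴴ * (U * A i - β • (A i * U))) = 0 := by
    have e : ∀ i : Fin r, (U * A i - β • (A i * U))ᴴ * (U * A i - β • (A i * U)) =
        (A i)ᴴ * (Uᴴ * U) * A i
          - β • (((A i)ᴴ * Uᴴ * A i) * U)
          - (starRingEnd ℂ) β • (Uᴴ * ((A i)ᴴ * U * A i))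
          + (β * (starRingEnd ℂ) β) • (Uᴴ * ((A i)ᴴ * A i) * U) := by
      intro i
      simp only [Matrix.conjTranspose_sub, Matrix.conjTranspose_smul, Matrix.conjTranspose_mul,
        RCLike.star_def, Matrix.sub_mul, Matrix.mul_sub, Matrix.smul_mul, Matrix.mul_smul,
        smul_smul, smul_add, Matrix.mul_assoc]
      module
    rw [Finset.sum_congr rfl fun i _ => e i]
    simp only [Finset.sum_add_distrib, Finset.sum_sub_distrib, ← Finset.smul_sum,
      ← Finset.sum_mul, ← Finset.mul_sum]
    have t1 : ∑ i, (A i)ᴴ * (Uᴴ * U) * A i = 1 := by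
      rw [hUU]; simpa using (hT 1).symm.trans hUnital
    have t2 : ∑ i, (A i)ᴴ * Uᴴ * A i = (starRingEnd ℂ) β • Uᴴ := by
      rw [← hTU', hT]
    have t3 : ∑ i, (A i)ᴴ * U * A i = β • U := by rw [← hEig, hT]
    have t4 : ∑ i, (A i)ᴴ * A i = 1 := by simpa using (hT 1).symm.trans hUnital
    have hcb' : (starRingEnd ℂ) β * β = 1 := by rw [mul_comm]; exact hcb
    rw [t1, t2, t3, t4]
    simp [Matrix.smul_mul, Matrix.mul_smul, smul_smul, hUU, hcb, hcb']
  have hB : ∀ i, U * A i = β • (A i * U) := by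
    intro i
    have := sum_conjTranspose_mul_self_eq_zero _ hS i
    rwa [sub_eq_zero] at this
  -- Step 2: action of `U` on the spectral projectors.
  have hPU : ∀ k : ZMod m, P k * U = β ^ k.val • P k := by
    intro k
    rw [hSpec, Finset.mul_sum]
    rw [Finset.sum_eq_single k (fun l _ hl => by
      rw [Matrix.mul_smul, hOrth k l (Ne.symm hl), smul_zero])
      (fun h => absurd (Finset.mem_univ k) h)]
    rw [Matrix.mul_smul, hIdem]
  have hUP : ∀ k : ZMod m, U * P k = β ^ k.val • P k := by
    intro k
    rw [hSpec, Finset.sum_mul]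
    rw [Finset.sum_eq_single k (fun l _ hl => by
      rw [Matrix.smul_mul, hOrth l k hl, smul_zero])
      (fun h => absurd (Finset.mem_univ k) h)]
    rw [Matrix.smul_mul, hIdem]
  -- powers of β only depend on the exponent mod m
  have hpowmod : ∀ a : ℕ, β ^ (a % m) = β ^ a := by
    intro a
    conv_rhs => rw [← Nat.div_add_mod a m]
    rw [pow_add, pow_mul, hβm, one_pow, one_mul]
  -- Step 3: `Pₖ Aᵢ P_l = 0` unless `k = l + 1`.
  have hKey : ∀ (i : Fin r) (k l : ZMod m), k ≠ l + 1 → P k * A i * P l = 0 := by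
    intro i k l hkl
    have h1 : P k * (U * A i) * P l = β ^ k.val • (P k * A i * P l) := by
      rw [← Matrix.mul_assoc (P k) U (A i), hPU, Matrix.smul_mul, Matrix.smul_mul]
    have h2 : P k * (β • (A i * U)) * P l = (β * β ^ l.val) • (P k * A i * P l) := by
      rw [Matrix.mul_smul, Matrix.smul_mul, ← Matrix.mul_assoc (P k) (A i) U,
        Matrix.mul_assoc (P k * A i) U (P l), hUP, Matrix.mul_smul, smul_smul,
        Matrix.mul_assoc]
    have h3 : β ^ k.val • (P k * A i * P l) = (β * β ^ l.val) • (P k * A i * P l) := by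
      rw [← h1, ← h2, hB i]
    have hne : β ^ k.val ≠ β * β ^ l.val := by
      intro hEq
      apply hkl
      have hβeq : β ^ k.val = β ^ ((l + 1 : ZMod m).val) := by
        rw [hEq, ← pow_succ']
        have : ((l + 1 : ZMod m).val) = (l.val + 1) % m := by
          have : ((l.val + 1 : ℕ) : ZMod m) = l + 1 := by push_cast [ZMod.natCast_val, ZMod.cast_id]; ring
          rw [← this, ZMod.val_natCast]
        rw [this, hpowmod]
      have := hprim.pow_inj (ZMod.val_lt k) (ZMod.val_lt (l + 1)) hβeq
      exact ZMod.val_injective m this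
    have h4 : (β ^ k.val - β * β ^ l.val) • (P k * A i * P l) = 0 := by
      rw [sub_smul, h3, sub_self]
    rcases smul_eq_zero.mp h4 with h | h
    · exact absurd (sub_eq_zero.mp h) hne
    · exact h
  -- Conclusion
  intro i k
  have e1 : A i * P (k - 1) = P k * A i * P (k - 1) := by
    conv_lhs => rw [← one_mul (A i * P (k - 1)), ← hSum, Finset.sum_mul]
    rw [Finset.sum_eq_single k (fun j _ hj => by
      rw [← Matrix.mul_assoc, hKey i j (k - 1) (by rwa [sub_add_cancel])])
      (fun h => absurd (Finset.mem_univ k) h)]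
    rw [Matrix.mul_assoc]
  have e2 : P k * A i = P k * A i * P (k - 1) := by
    conv_lhs => rw [← mul_one (P k * A i), ← hSum, Finset.mul_sum]
    rw [Finset.sum_eq_single (k - 1) (fun l _ hl => by
      rw [hKey i k l (fun hc => hl (by rw [hc]; ring))])
      (fun h => absurd (Finset.mem_univ (k - 1)) h)]
  exact e1.trans e2.symm
end

section
/- Let T be an irreducible unital CP map of degree m, U = ∑_k β^k P_k the unitary eigenvector for β = e^{2πi/m}, and σ the positive definite fixed point of T (the right eigenvector for eigenvalue 1 of the predual). Then σ is block diagonal with respect to the projectors P_k: σ = ∑_{k=1}^m P_k σ P_k. -/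
open Matrix ComplexOrder

/-- Let `T(X) = ∑ᵢ Aᵢ† X Aᵢ` be an irreducible unital CP map of degree `m`, with Kraus
intertwining relation `Pₖ Aᵢ = Aᵢ P_{k−1}` for the spectral projectors `Pₖ` of the unitary
eigenvector `U = ∑ₖ βᵏ Pₖ`, and let `σ` be the positive definite fixed point of the
predual map `S(X) = ∑ᵢ Aᵢ X Aᵢ†` (the eigenvalue `1` of `S` being nondegenerate, by
irreducibility). Then `σ` is block diagonal with respect to the `Pₖ`:
`σ = ∑ₖ Pₖ σ Pₖ`. -/
theorem fixed_point_block_diagonal (D r m : ℕ) [NeZero m] (hm : m ≤ D)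
    (A : Fin r → Matrix (Fin D) (Fin D) ℂ)
    (T S : Module.End ℂ (Matrix (Fin D) (Fin D) ℂ))
    (hT : ∀ X, T X = ∑ i, (A i)ᴴ * X * A i)
    (hS : ∀ X, S X = ∑ i, A i * X * (A i)ᴴ)
    (hUnital : T 1 = 1)
    (P : ZMod m → Matrix (Fin D) (Fin D) ℂ)
    (hHerm : ∀ k, (P k)ᴴ = P k)
    (hIdem : ∀ k, P k * P k = P k)
    (hOrth : ∀ k l, k ≠ l → P k * P l = 0)
    (hSum : ∑ k, P k = 1)
    (hIntertwine : ∀ (k : ZMod m) (i : Fin r), P k * A i = A i * P (k - 1))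
    (σ : Matrix (Fin D) (Fin D) ℂ) (hσ : σ.PosDef) (hFix : S σ = σ)
    (hSimple : Module.finrank ℂ (S.eigenspace 1) = 1) :
    σ = ∑ k, P k * σ * P k := by
  rcases Nat.eq_zero_or_pos D with hD | hD
  · subst hD
    ext i j
    exact i.elim0
  have hne : Nonempty (Fin D) := ⟨⟨0, hD⟩⟩
  -- trace of σ is positive
  have hdiag : ∀ i : Fin D, 0 < σ i i := by
    intro i
    have hx : (Pi.single i 1 : Fin D → ℂ) ≠ 0 := by
      intro h
      have := congrFun h i
      simp at this
    have := hσ.dotProduct_mulVec_pos hx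
    simpa [dotProduct, mulVec, Pi.single_apply, Finset.sum_ite_eq, Finset.sum_ite_eq'] using this
  have htrpos : 0 < σ.trace := by
    rw [Matrix.trace]
    exact Finset.sum_pos (fun i _ => hdiag i) Finset.univ_nonempty
  have htrne : σ.trace ≠ 0 := ne_of_gt htrpos
  have hσne : σ ≠ 0 := by
    intro h
    rw [h] at htrne
    simp at htrne
  set τ : Matrix (Fin D) (Fin D) ℂ := ∑ k, P k * σ * P k with hτdef
  -- intertwining variants
  have hI1 : ∀ (k : ZMod m) (i : Fin r), A i * P k = P (k + 1) * A i := by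
    intro k i
    have h := hIntertwine (k + 1) i
    simpa using h.symm
  have hI2 : ∀ (k : ZMod m) (i : Fin r), P k * (A i)ᴴ = (A i)ᴴ * P (k + 1) := by
    intro k i
    have h := congrArg conjTranspose (hI1 k i)
    simpa [Matrix.conjTranspose_mul, hHerm] using h
  -- τ is a fixed point of S
  have hfixτ : S τ = τ := by
    rw [hS, hτdef]
    have key : ∀ i : Fin r, A i * (∑ k, P k * σ * P k) * (A i)ᴴ
        = ∑ k, P (k + 1) * (A i * σ * (A i)ᴴ) * P (k + 1) := by
      intro i
      rw [Finset.mul_sum, Finset.sum_mul]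
      refine Finset.sum_congr rfl fun k _ => ?_
      calc A i * (P k * σ * P k) * (A i)ᴴ
          = (A i * P k) * σ * (P k * (A i)ᴴ) := by
            simp only [Matrix.mul_assoc]
        _ = (P (k + 1) * A i) * σ * ((A i)ᴴ * P (k + 1)) := by rw [hI1, hI2]
        _ = P (k + 1) * (A i * σ * (A i)ᴴ) * P (k + 1) := by
            simp only [Matrix.mul_assoc]
    calc ∑ i, A i * (∑ k, P k * σ * P k) * (A i)ᴴ
        = ∑ i, ∑ k, P (k + 1) * (A i * σ * (A i)ᴴ) * P (k + 1) := by
          exact Finset.sum_congr rfl fun i _ => key i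
      _ = ∑ k, ∑ i, P (k + 1) * (A i * σ * (A i)ᴴ) * P (k + 1) := Finset.sum_comm
      _ = ∑ k, P (k + 1) * (∑ i, A i * σ * (A i)ᴴ) * P (k + 1) := by
          refine Finset.sum_congr rfl fun k _ => ?_
          rw [Finset.mul_sum, Finset.sum_mul]
      _ = ∑ k, P (k + 1) * σ * P (k + 1) := by
          refine Finset.sum_congr rfl fun k _ => ?_
          rw [← hS, hFix]
      _ = ∑ k, P k * σ * P k := Fintype.sum_equiv (Equiv.addRight (1 : ZMod m)) _ _
            (fun k => rfl)
  -- traces agree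
  have htr : τ.trace = σ.trace := by
    rw [hτdef, Matrix.trace_sum]
    calc ∑ k, (P k * σ * P k).trace
        = ∑ k, (P k * σ).trace := by
          refine Finset.sum_congr rfl fun k _ => ?_
          rw [Matrix.trace_mul_cycle, hIdem]
      _ = ((∑ k, P k) * σ).trace := by rw [Finset.sum_mul, Matrix.trace_sum]
      _ = σ.trace := by rw [hSum, one_mul]
  -- use one-dimensionality of the fixed space
  have hmemσ : σ ∈ S.eigenspace 1 := by
    rw [Module.End.mem_eigenspace_iff, one_smul]
    exact hFix
  have hmemτ : τ ∈ S.eigenspace 1 := by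
    rw [Module.End.mem_eigenspace_iff, one_smul]
    exact hfixτ
  set v : S.eigenspace 1 := ⟨σ, hmemσ⟩ with hv
  have hvne : v ≠ 0 := by
    intro h
    apply hσne
    have := congrArg (Subtype.val) h
    simpa [hv] using this
  obtain ⟨c, hc⟩ := (finrank_eq_one_iff_of_nonzero' v hvne).mp hSimple ⟨τ, hmemτ⟩
  have hcσ : c • σ = τ := by
    have := congrArg (Subtype.val) hc
    simpa [hv] using this
  have hctrace : c * σ.trace = σ.trace := by
    calc c * σ.trace = (c • σ).trace := by rw [Matrix.trace_smul]; rfl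
      _ = τ.trace := by rw [hcσ]
      _ = σ.trace := htr
  have hc1 : c = 1 := by
    have := mul_right_cancel₀ htrne (hctrace.trans (one_mul σ.trace).symm)
    exact this
  rw [← hcσ, hc1, one_smul]
end

section
/- Let T be a CP map on M_D(ℂ). There exists a density matrix ρ (positive semidefinite, trace one) and μ ≥ 0 such that T(ρ) = μρ. -/
open Matrix ComplexOrder

attribute [local instance] Matrix.normedAddCommGroup Matrix.normedSpace

section Aux
variable {D : ℕ}

private lemma psd_smul_real {c : ℝ} (hc : 0 ≤ c) {X : Matrix (Fin D) (Fin D) ℂ}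
    (hX : X.PosSemidef) : ((c : ℂ) • X).PosSemidef := by
  refine .of_dotProduct_mulVec_nonneg ?_ ?_
  · rw [IsHermitian, conjTranspose_smul, hX.1]
    congr 1
    simp [star, Complex.ext_iff]
  · intro v
    rw [smul_mulVec, dotProduct_smul]
    exact smul_nonneg (by exact_mod_cast hc) (hX.dotProduct_mulVec_nonneg v)

private lemma psd_diag {X : Matrix (Fin D) (Fin D) ℂ} (hX : X.PosSemidef) (i : Fin D) :
    0 ≤ X i i := by
  simpa [dotProduct, mulVec, Pi.single_apply] using hX.dotProduct_mulVec_nonneg (Pi.single i 1)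

private lemma psd_trace_nonneg {X : Matrix (Fin D) (Fin D) ℂ} (hX : X.PosSemidef) :
    0 ≤ X.trace :=
  Finset.sum_nonneg fun i _ => psd_diag hX i

private lemma psd_trace_re {X : Matrix (Fin D) (Fin D) ℂ} (hX : X.PosSemidef) :
    X.trace = (X.trace.re : ℂ) := by
  have h := psd_trace_nonneg hX
  rw [Complex.nonneg_iff] at h
  exact Complex.ext rfl (by simpa using h.2.symm)

private lemma psd_trace_re_nonneg {X : Matrix (Fin D) (Fin D) ℂ} (hX : X.PosSemidef) :
    0 ≤ X.trace.re := by
  have h := psd_trace_nonneg hX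
  rw [Complex.nonneg_iff] at h
  exact h.1

private lemma euclid_norm_sq (x : EuclideanSpace ℂ (Fin D)) : ‖x‖ ^ 2 = ∑ l, ‖x l‖ ^ 2 := by
  rw [EuclideanSpace.norm_eq, Real.sq_sqrt (Finset.sum_nonneg fun l _ => sq_nonneg _)]

private lemma psd_entry_le {X : Matrix (Fin D) (Fin D) ℂ} (hX : X.PosSemidef) (i j : Fin D) :
    ‖X i j‖ ≤ X.trace.re := by
  obtain ⟨B, rfl⟩ := (by open scoped MatrixOrder in exact CStarAlgebra.nonneg_iff_eq_star_mul_self.mp hX.nonneg : ∃ B : Matrix (Fin D) (Fin D) ℂ, X = Bᴴ * B)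
  set u : Fin D → EuclideanSpace ℂ (Fin D) := fun i => WithLp.toLp 2 (fun k => B k i)
  have hentry : ∀ i j, (Bᴴ * B) i j = inner ℂ (u i) (u j) := by
    intro i j
    simp [Matrix.mul_apply, conjTranspose_apply, PiLp.inner_apply, u, mul_comm]
  have htr : (Bᴴ * B).trace.re = ∑ k, ‖u k‖ ^ 2 := by
    rw [Matrix.trace, Complex.re_sum]
    refine Finset.sum_congr rfl fun k _ => ?_
    rw [Matrix.diag_apply, hentry, inner_self_eq_norm_sq_to_K]
    simp [← Complex.ofReal_pow]
  have hle : ∀ k, ‖u k‖ ^ 2 ≤ (Bᴴ * B).trace.re := by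
    intro k
    rw [htr]
    exact Finset.single_le_sum (f := fun l => ‖u l‖ ^ 2) (fun l _ => sq_nonneg _)
      (Finset.mem_univ k)
  have h1 : ‖(Bᴴ * B) i j‖ ≤ ‖u i‖ * ‖u j‖ := by
    rw [hentry]; exact norm_inner_le_norm _ _
  nlinarith [hle i, hle j, sq_nonneg (‖u i‖ - ‖u j‖), norm_nonneg (u i), norm_nonneg (u j)]

private lemma psd_le_trace_one {X : Matrix (Fin D) (Fin D) ℂ} (hX : X.PosSemidef) :
    (X.trace • (1 : Matrix (Fin D) (Fin D) ℂ) - X).PosSemidef := by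
  have htre : X.trace = (X.trace.re : ℂ) := psd_trace_re hX
  obtain ⟨B, hB⟩ := (by open scoped MatrixOrder in exact CStarAlgebra.nonneg_iff_eq_star_mul_self.mp hX.nonneg : ∃ B : Matrix (Fin D) (Fin D) ℂ, X = Bᴴ * B)
  refine .of_dotProduct_mulVec_nonneg ?_ ?_
  · refine IsHermitian.sub ?_ hX.1
    rw [IsHermitian, conjTranspose_smul, conjTranspose_one, htre]
    congr 1
    simp [star, Complex.ext_iff]
  · intro v
    rw [sub_mulVec, dotProduct_sub, smul_mulVec, one_mulVec, dotProduct_smul,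
      sub_nonneg]
    set v' : EuclideanSpace ℂ (Fin D) := WithLp.toLp 2 v with hv'
    set w : Fin D → EuclideanSpace ℂ (Fin D) := fun k => WithLp.toLp 2 (fun l => star (B k l)) with hw
    have hLHS : star v ⬝ᵥ (X *ᵥ v) = ((∑ k, ‖(B *ᵥ v) k‖ ^ 2 : ℝ) : ℂ) := by
      rw [hB, ← mulVec_mulVec, dotProduct_mulVec, vecMul_conjTranspose, star_star,
        dotProduct, Complex.ofReal_sum]
      exact Finset.sum_congr rfl fun k _ => by
        rw [Pi.star_apply, Complex.star_def, RCLike.conj_mul]; norm_cast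
    have hvv : star v ⬝ᵥ v = ((‖v'‖ ^ 2 : ℝ) : ℂ) := by
      rw [dotProduct, euclid_norm_sq, Complex.ofReal_sum]
      exact Finset.sum_congr rfl fun k _ => by
        rw [Pi.star_apply, Complex.star_def, RCLike.conj_mul]; norm_cast
    have hrow : ∀ k, (B *ᵥ v) k = inner ℂ (w k) v' := by
      intro k
      simp only [mulVec, dotProduct, PiLp.inner_apply, hw, RCLike.inner_apply]
      exact Finset.sum_congr rfl fun l _ => by simp [hv', mul_comm]
    have htrw : X.trace.re = ∑ k, ‖w k‖ ^ 2 := by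
      have : ∀ k, ‖w k‖ ^ 2 = ∑ l, ‖B k l‖ ^ 2 := by
        intro k
        rw [euclid_norm_sq]
        exact Finset.sum_congr rfl fun l _ => by simp [hw]
      simp_rw [this]
      rw [Matrix.trace, Complex.re_sum, Finset.sum_comm]
      refine Finset.sum_congr rfl fun l _ => ?_
      rw [Matrix.diag_apply, hB, Matrix.mul_apply, Complex.re_sum]
      refine Finset.sum_congr rfl fun k _ => ?_
      rw [conjTranspose_apply, Complex.star_def, RCLike.conj_mul]
      norm_cast
    rw [hLHS, hvv, htre, smul_eq_mul, ← Complex.ofReal_mul, Complex.real_le_real]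
    calc ∑ k, ‖(B *ᵥ v) k‖ ^ 2 ≤ ∑ k, ‖w k‖ ^ 2 * ‖v'‖ ^ 2 := by
          refine Finset.sum_le_sum fun k _ => ?_
          rw [hrow, ← mul_pow]
          exact pow_le_pow_left₀ (norm_nonneg _) (norm_inner_le_norm _ _) 2
      _ = X.trace.re * ‖v'‖ ^ 2 := by rw [← Finset.sum_mul, htrw]

end Aux

set_option maxHeartbeats 1000000 in
/-- Every CP map on `M_D(ℂ)` has a density-matrix eigenvector: there exist a positive
semidefinite matrix `ρ` of trace one and `μ ≥ 0` with `T(ρ) = μρ`. -/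
theorem cp_map_has_density_eigenvector (D : ℕ) (hD : 1 ≤ D)
    (T : Module.End ℂ (Matrix (Fin D) (Fin D) ℂ)) (hT : IsCPMap T) :
    ∃ (ρ : Matrix (Fin D) (Fin D) ℂ) (μ : ℝ),
      ρ.PosSemidef ∧ ρ.trace = 1 ∧ 0 ≤ μ ∧ T ρ = (μ : ℂ) • ρ := by
  classical
  obtain ⟨r, A, hA⟩ := hT
  have hDR : (1 : ℝ) ≤ (D : ℝ) := by exact_mod_cast hD
  have hD0 : (D : ℂ) ≠ 0 := by
    simp only [ne_eq, Nat.cast_eq_zero]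
    omega
  -- T preserves positive semidefiniteness
  have hTpos : ∀ X : Matrix (Fin D) (Fin D) ℂ, X.PosSemidef → (T X).PosSemidef := by
    intro X hX
    rw [hA X]
    exact Finset.sum_induction _ _ (fun a b ha hb => ha.add hb) Matrix.PosSemidef.zero
      (fun i _ => hX.mul_mul_conjTranspose_same (A i))
  have hTkpos : ∀ (k : ℕ) (X : Matrix (Fin D) (Fin D) ℂ), X.PosSemidef →
      ((T ^ k) X).PosSemidef := by
    intro k
    induction k with
    | zero => intro X hX; simpa using hX
    | succ k ih =>
      intro X hX
      rw [pow_succ, Module.End.mul_apply]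
      exact ih _ (hTpos X hX)
  -- the reference state
  set ρ0 : Matrix (Fin D) (Fin D) ℂ := (((D : ℝ)⁻¹ : ℝ) : ℂ) • 1 with hρ0def
  have hρ0psd : ρ0.PosSemidef := psd_smul_real (by positivity) Matrix.PosSemidef.one
  have hρ0tr : ρ0.trace = 1 := by
    rw [hρ0def, trace_smul, trace_one, Fintype.card_fin, smul_eq_mul]
    push_cast
    field_simp
  have hone : (1 : Matrix (Fin D) (Fin D) ℂ) = ((D : ℝ) : ℂ) • ρ0 := by
    rw [hρ0def, smul_smul]
    push_cast
    rw [mul_inv_cancel₀ hD0, one_smul]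
  -- the trace sequence
  set a : ℕ → ℝ := fun k => (((T ^ k) ρ0).trace).re with ha_def
  have hak_psd : ∀ k, ((T ^ k) ρ0).PosSemidef := fun k => hTkpos k ρ0 hρ0psd
  have hak_tr : ∀ k, ((T ^ k) ρ0).trace = ((a k : ℝ) : ℂ) := fun k => psd_trace_re (hak_psd k)
  have ha_nonneg : ∀ k, 0 ≤ a k := fun k => psd_trace_re_nonneg (hak_psd k)
  have ha0 : a 0 = 1 := by
    simp only [ha_def, pow_zero, Module.End.one_apply, hρ0tr, Complex.one_re]
  -- submultiplicativity
  have hsub : ∀ j k, a (j + k) ≤ (D : ℝ) * a j * a k := by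
    intro j k
    have hP : ((T ^ j) ρ0).PosSemidef := hak_psd j
    have hQ : (((a j : ℝ) : ℂ) • (1 : Matrix (Fin D) (Fin D) ℂ) - (T ^ j) ρ0).PosSemidef := by
      have := psd_le_trace_one hP
      rwa [hak_tr j] at this
    have hR : ((T ^ k) (((a j : ℝ) : ℂ) • (1 : Matrix (Fin D) (Fin D) ℂ) - (T ^ j) ρ0)).PosSemidef :=
      hTkpos k _ hQ
    rw [map_sub, _root_.map_smul] at hR
    have hTk1 : (T ^ k) (1 : Matrix (Fin D) (Fin D) ℂ) = ((D : ℝ) : ℂ) • (T ^ k) ρ0 := by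
      rw [hone, _root_.map_smul]
    have hTkj : (T ^ k) ((T ^ j) ρ0) = (T ^ (j + k)) ρ0 := by
      rw [add_comm, pow_add, Module.End.mul_apply]
    rw [hTk1, hTkj] at hR
    have := psd_trace_nonneg hR
    rw [trace_sub, trace_smul, trace_smul, hak_tr k, hak_tr (j + k)] at this
    have h2 : (0 : ℂ) ≤ (((D : ℝ) * a j * a k - a (j + k) : ℝ) : ℂ) := by
      convert this using 1
      simp only [smul_eq_mul]
      push_cast
      ring
    rw [Complex.zero_le_real] at h2
    linarith
  -- the candidate eigenvalue
  set μ : ℝ := ⨅ k : ℕ, ((D : ℝ) * a (k + 1)) ^ (((k + 1 : ℕ) : ℝ)⁻¹) with hμdef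
  have hbdd : BddBelow (Set.range fun k : ℕ => ((D : ℝ) * a (k + 1)) ^ (((k + 1 : ℕ) : ℝ)⁻¹)) := by
    refine ⟨0, fun x hx => ?_⟩
    obtain ⟨k, rfl⟩ := hx
    exact Real.rpow_nonneg (mul_nonneg (by positivity) (ha_nonneg _)) _
  have hμ0 : 0 ≤ μ := by
    refine le_ciInf fun k => Real.rpow_nonneg (mul_nonneg (by positivity) (ha_nonneg _)) _
  have hμpow : ∀ k, μ ^ k ≤ (D : ℝ) * a k := by
    intro k
    cases k with
    | zero => simpa [ha0] using hDR
    | succ k =>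
      have h1 : μ ≤ ((D : ℝ) * a (k + 1)) ^ (((k + 1 : ℕ) : ℝ)⁻¹) := ciInf_le hbdd k
      calc μ ^ (k + 1) ≤ (((D : ℝ) * a (k + 1)) ^ (((k + 1 : ℕ) : ℝ)⁻¹)) ^ (k + 1) :=
            pow_le_pow_left₀ hμ0 h1 _
        _ = (D : ℝ) * a (k + 1) := Real.rpow_inv_natCast_pow (mul_nonneg (by positivity) (ha_nonneg _)) (by omega)
  have hexfind : ∀ lam : ℝ, μ < lam → ∃ k0 : ℕ, 1 ≤ k0 ∧ (D : ℝ) * a k0 < lam ^ k0 := by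
    intro lam hlam
    obtain ⟨k, hk⟩ := exists_lt_of_ciInf_lt hlam
    refine ⟨k + 1, le_add_self, ?_⟩
    have h0 : (0 : ℝ) ≤ ((D : ℝ) * a (k + 1)) ^ (((k + 1 : ℕ) : ℝ)⁻¹) :=
      Real.rpow_nonneg (mul_nonneg (by positivity) (ha_nonneg _)) _
    calc (D : ℝ) * a (k + 1)
        = (((D : ℝ) * a (k + 1)) ^ (((k + 1 : ℕ) : ℝ)⁻¹)) ^ (k + 1) :=
          (Real.rpow_inv_natCast_pow (mul_nonneg (by positivity) (ha_nonneg _)) (by omega)).symm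
      _ < lam ^ (k + 1) := pow_lt_pow_left₀ hk h0 (by omega)
  -- approximate eigenvectors
  have key : ∀ n : ℕ, ∃ (y : Matrix (Fin D) (Fin D) ℂ) (lam : ℝ),
      y.PosSemidef ∧ y.trace = 1 ∧ μ ≤ lam ∧ lam ≤ μ + ((n : ℝ) + 1)⁻¹ ∧
      ‖(lam : ℂ) • y - T y‖ ≤ 2 * ((n : ℝ) + 1)⁻¹ := by
    intro n
    set ε : ℝ := (2 * (D : ℝ) * ((n : ℝ) + 1))⁻¹ with hεdef
    have hε0 : 0 < ε := by positivity
    set lam : ℝ := μ + ε with hlamdef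
    have hμlam : μ < lam := lt_add_of_pos_right μ hε0
    have hlam0 : 0 < lam := lt_of_le_of_lt hμ0 hμlam
    obtain ⟨k0, hk01, hk0⟩ := hexfind lam hμlam
    have hmult : ∀ m : ℕ, 1 ≤ m → (D : ℝ) * a (m * k0) ≤ (lam ^ k0) ^ m := by
      intro m hm
      induction m, hm using Nat.le_induction with
      | base => simpa using hk0.le
      | succ m hm ih =>
        have h1 : a ((m + 1) * k0) ≤ (D : ℝ) * a k0 * a (m * k0) := by
          have h := hsub k0 (m * k0)
          rwa [show k0 + m * k0 = (m + 1) * k0 by ring] at h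
        calc (D : ℝ) * a ((m + 1) * k0) ≤ (D : ℝ) * ((D : ℝ) * a k0 * a (m * k0)) :=
              mul_le_mul_of_nonneg_left h1 (by positivity)
          _ = ((D : ℝ) * a k0) * ((D : ℝ) * a (m * k0)) := by ring
          _ ≤ (lam ^ k0) * (lam ^ k0) ^ m :=
              mul_le_mul hk0.le ih (mul_nonneg (by positivity) (ha_nonneg _))
                (by positivity)
          _ = (lam ^ k0) ^ (m + 1) := by ring
    set q : ℝ := μ / lam with hqdef
    have hq0 : 0 ≤ q := div_nonneg hμ0 hlam0.le
    have hq1 : q < 1 := (div_lt_one hlam0).2 hμlam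
    obtain ⟨M, hM⟩ := exists_pow_lt_of_lt_one (by norm_num : (0 : ℝ) < 1 / 2) hq1
    set N : ℕ := (M + 1) * k0 with hNdef
    have hN1 : 1 ≤ N := by
      rw [hNdef]; exact Nat.one_le_iff_ne_zero.2 (by positivity)
    have hMN : M ≤ N := by
      rw [hNdef]; calc M ≤ M + 1 := Nat.le_succ M
        _ ≤ (M + 1) * k0 := Nat.le_mul_of_pos_right _ (by omega)
    have hqN : q ^ N ≤ 1 / 2 :=
      le_trans (pow_le_pow_of_le_one hq0 hq1.le hMN) hM.le
    have hDN : (D : ℝ) * a N ≤ lam ^ N := by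
      have h := hmult (M + 1) (by omega)
      rwa [← pow_mul, mul_comm k0 (M + 1), ← hNdef] at h
    set x : Matrix (Fin D) (Fin D) ℂ :=
      ∑ k ∈ Finset.range N, (((lam ^ (k + 1))⁻¹ : ℝ) : ℂ) • (T ^ k) ρ0 with hxdef
    have hxpsd : x.PosSemidef := by
      rw [hxdef]
      exact Finset.sum_induction _ _ (fun u v hu hv => hu.add hv) Matrix.PosSemidef.zero
        (fun k _ => psd_smul_real (by positivity) (hak_psd k))
    set t : ℝ := ∑ k ∈ Finset.range N, (lam ^ (k + 1))⁻¹ * a k with htdef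
    have hxtr : x.trace = ((t : ℝ) : ℂ) := by
      rw [hxdef, trace_sum, htdef, Complex.ofReal_sum]
      refine Finset.sum_congr rfl fun k _ => ?_
      rw [trace_smul, hak_tr k, smul_eq_mul, ← Complex.ofReal_mul]
    have htlow : ∀ k, q ^ k * (lam * (D : ℝ))⁻¹ ≤ (lam ^ (k + 1))⁻¹ * a k := by
      intro k
      have hak2 : μ ^ k / (D : ℝ) ≤ a k := by
        rw [div_le_iff₀ (by positivity)]
        calc μ ^ k ≤ (D : ℝ) * a k := hμpow k
          _ = a k * (D : ℝ) := by ring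
      have hDne : (D : ℝ) ≠ 0 := by positivity
      calc q ^ k * (lam * (D : ℝ))⁻¹ = (lam ^ (k + 1))⁻¹ * (μ ^ k / (D : ℝ)) := by
            rw [hqdef, div_pow, pow_succ]
            field_simp
        _ ≤ (lam ^ (k + 1))⁻¹ * a k :=
            mul_le_mul_of_nonneg_left hak2 (by positivity)
    have hsumq : ∑ k ∈ Finset.range N, q ^ k = (1 - q ^ N) / (1 - q) := by
      rw [geom_sum_eq hq1.ne N]
      have h1 : q - 1 ≠ 0 := sub_ne_zero.2 hq1.ne
      have h2 : (1 : ℝ) - q ≠ 0 := sub_ne_zero.2 (ne_of_gt (by linarith))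
      field_simp
      ring
    have h1mq : 1 - q = ε / lam := by
      rw [hqdef]
      field_simp
      rw [hlamdef]
      ring
    have htge : ((n : ℝ) + 1) ≤ t := by
      have h1 : ∑ k ∈ Finset.range N, q ^ k * (lam * (D : ℝ))⁻¹ ≤ t := by
        rw [htdef]
        exact Finset.sum_le_sum fun k _ => htlow k
      rw [← Finset.sum_mul, hsumq] at h1
      have h2 : ((n : ℝ) + 1) ≤ (1 - q ^ N) / (1 - q) * (lam * (D : ℝ))⁻¹ := by
        rw [h1mq]
        have hval : (1 / 2 : ℝ) / (ε / lam) * (lam * (D : ℝ))⁻¹ = ((n : ℝ) + 1) := by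
          rw [hεdef]
          field_simp
        have hfrac : (1 / 2 : ℝ) / (ε / lam) ≤ (1 - q ^ N) / (ε / lam) :=
          (div_le_div_iff_of_pos_right (by positivity)).2 (by linarith)
        calc ((n : ℝ) + 1) = (1 / 2 : ℝ) / (ε / lam) * (lam * (D : ℝ))⁻¹ := hval.symm
          _ ≤ (1 - q ^ N) / (ε / lam) * (lam * (D : ℝ))⁻¹ :=
            mul_le_mul_of_nonneg_right hfrac (by positivity)
      linarith
    set e : Matrix (Fin D) (Fin D) ℂ := (((lam ^ N)⁻¹ : ℝ) : ℂ) • (T ^ N) ρ0 with hedef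
    have htel : (lam : ℂ) • x - T x = ρ0 - e := by
      have hTx : T x = ∑ k ∈ Finset.range N,
          (((lam ^ (k + 1))⁻¹ : ℝ) : ℂ) • (T ^ (k + 1)) ρ0 := by
        rw [hxdef, map_sum]
        refine Finset.sum_congr rfl fun k _ => ?_
        rw [_root_.map_smul]
        congr 1
        rw [pow_succ', Module.End.mul_apply]
      have hlx : (lam : ℂ) • x = ∑ k ∈ Finset.range N,
          (((lam ^ k)⁻¹ : ℝ) : ℂ) • (T ^ k) ρ0 := by
        rw [hxdef, Finset.smul_sum]
        refine Finset.sum_congr rfl fun k _ => ?_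
        rw [smul_smul, ← Complex.ofReal_mul]
        congr 2
        rw [pow_succ]
        field_simp
      rw [hlx, hTx, ← Finset.sum_sub_distrib]
      rw [Finset.sum_range_sub' (fun k => (((lam ^ k)⁻¹ : ℝ) : ℂ) • (T ^ k) ρ0) N]
      rw [hedef]
      congr 1
      simp
    have hepsd : e.PosSemidef := psd_smul_real (by positivity) (hak_psd N)
    have hetr_le : e.trace.re ≤ 1 := by
      have : e.trace = (((lam ^ N)⁻¹ * a N : ℝ) : ℂ) := by
        rw [hedef, trace_smul, hak_tr N, smul_eq_mul, ← Complex.ofReal_mul]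
      rw [this, Complex.ofReal_re, inv_mul_le_iff₀ (by positivity), mul_one]
      nlinarith [hDN, ha_nonneg N, hDR]
    have henorm : ‖e‖ ≤ 1 := by
      rw [norm_le_iff zero_le_one]
      exact fun i j => le_trans (psd_entry_le hepsd i j) hetr_le
    have hρ0norm : ‖ρ0‖ ≤ 1 := by
      rw [norm_le_iff zero_le_one]
      intro i j
      simpa [hρ0tr] using psd_entry_le hρ0psd i j
    have ht0 : 0 < t := lt_of_lt_of_le (by positivity) htge
    refine ⟨((t⁻¹ : ℝ) : ℂ) • x, lam, psd_smul_real (by positivity) hxpsd, ?_, hμlam.le, ?_, ?_⟩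
    · rw [trace_smul, hxtr, smul_eq_mul, ← Complex.ofReal_mul, inv_mul_cancel₀ ht0.ne']
      simp
    · rw [hlamdef]
      have hεle : ε ≤ ((n : ℝ) + 1)⁻¹ := by
        rw [hεdef]
        apply inv_anti₀ (by positivity)
        nlinarith
      linarith
    · have heq : (lam : ℂ) • (((t⁻¹ : ℝ) : ℂ) • x) - T (((t⁻¹ : ℝ) : ℂ) • x)
          = ((t⁻¹ : ℝ) : ℂ) • (ρ0 - e) := by
        rw [_root_.map_smul, smul_comm ((lam : ℝ) : ℂ) (((t⁻¹ : ℝ) : ℂ)) x, ← smul_sub, htel]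
      rw [heq, norm_smul]
      have hn1 : ‖((t⁻¹ : ℝ) : ℂ)‖ = t⁻¹ := by
        simp [Complex.norm_real, abs_of_nonneg (inv_nonneg.2 ht0.le), ht0.le]
      rw [hn1]
      have h2 : ‖ρ0 - e‖ ≤ 2 := le_trans (norm_sub_le _ _) (by linarith)
      have h3 : t⁻¹ ≤ ((n : ℝ) + 1)⁻¹ := inv_anti₀ (by positivity) htge
      calc t⁻¹ * ‖ρ0 - e‖ ≤ ((n : ℝ) + 1)⁻¹ * 2 :=
            mul_le_mul h3 h2 (norm_nonneg _) (by positivity)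
        _ = 2 * ((n : ℝ) + 1)⁻¹ := by ring
  -- choose the approximating sequence
  choose y lam hypsd hytr hlam_lo hlam_hi hbound using key
  haveI : FiniteDimensional ℂ (Matrix (Fin D) (Fin D) ℂ) := by infer_instance
  haveI : ProperSpace (Matrix (Fin D) (Fin D) ℂ) := FiniteDimensional.proper ℂ _
  set K : Set (Matrix (Fin D) (Fin D) ℂ) := {X | X.PosSemidef ∧ X.trace = 1} with hKdef
  have hcoord : ∀ i j : Fin D, Continuous fun X : Matrix (Fin D) (Fin D) ℂ => X i j := by
    intro i j
    let f : Matrix (Fin D) (Fin D) ℂ →ₗ[ℂ] ℂ :=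
      { toFun := fun X => X i j, map_add' := fun _ _ => rfl, map_smul' := fun _ _ => rfl }
    exact f.continuous_of_finiteDimensional
  have hKclosed : IsClosed K := by
    have h1 : IsClosed {X : Matrix (Fin D) (Fin D) ℂ | X.PosSemidef} := by
      have heq : {X : Matrix (Fin D) (Fin D) ℂ | X.PosSemidef} =
          (⋂ (i : Fin D) (j : Fin D), {X : Matrix (Fin D) (Fin D) ℂ | star (X j i) = X i j}) ∩
          (⋂ v : Fin D → ℂ, {X : Matrix (Fin D) (Fin D) ℂ | 0 ≤ star v ⬝ᵥ (X *ᵥ v)}) := by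
        ext X
        simp only [Set.mem_setOf_eq, Set.mem_inter_iff, Set.mem_iInter]
        constructor
        · intro h
          exact ⟨fun i j => IsHermitian.ext_iff.mp h.1 i j, fun v => h.dotProduct_mulVec_nonneg v⟩
        · intro h
          exact .of_dotProduct_mulVec_nonneg (IsHermitian.ext_iff.mpr h.1) h.2
      rw [heq]
      refine IsClosed.inter ?_ ?_
      · refine isClosed_iInter fun i => isClosed_iInter fun j => ?_
        exact isClosed_eq (continuous_star.comp (hcoord j i)) (hcoord i j)
      · refine isClosed_iInter fun v => ?_
        have hc : Continuous fun X : Matrix (Fin D) (Fin D) ℂ => star v ⬝ᵥ (X *ᵥ v) := by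
          have hrw : (fun X : Matrix (Fin D) (Fin D) ℂ => star v ⬝ᵥ (X *ᵥ v)) =
              fun X => ∑ i, star (v i) * ∑ j, X i j * v j := by
            funext X
            simp [dotProduct, mulVec]
          rw [hrw]
          exact continuous_finset_sum _ fun i _ => Continuous.mul continuous_const
            (continuous_finset_sum _ fun j _ => (hcoord i j).mul continuous_const)
        have hcl : IsClosed {z : ℂ | 0 ≤ z} := by
          have : {z : ℂ | 0 ≤ z} = Complex.re ⁻¹' (Set.Ici 0) ∩ Complex.im ⁻¹' {0} := by
            ext z
            simp [Complex.nonneg_iff, and_comm, eq_comm]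
          rw [this]
          exact (isClosed_Ici.preimage Complex.continuous_re).inter
            (isClosed_singleton.preimage Complex.continuous_im)
        exact hcl.preimage hc
    have h2 : IsClosed {X : Matrix (Fin D) (Fin D) ℂ | X.trace = 1} := by
      have htrc : Continuous fun X : Matrix (Fin D) (Fin D) ℂ => X.trace := by
        have hrw : (fun X : Matrix (Fin D) (Fin D) ℂ => X.trace) = fun X => ∑ i, X i i := by
          funext X
          rfl
        rw [hrw]
        exact continuous_finset_sum _ fun i _ => hcoord i i
      exact isClosed_eq htrc continuous_const
    exact h1.inter h2
  have hKbdd : Bornology.IsBounded K := by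
    have : K ⊆ Metric.closedBall 0 1 := by
      intro X hX
      rw [Metric.mem_closedBall, dist_zero_right]
      rw [norm_le_iff zero_le_one]
      intro i j
      have h := psd_entry_le hX.1 i j
      rw [hX.2] at h
      simpa using h
    exact (Metric.isBounded_closedBall).subset this
  have hymem : ∀ n, y n ∈ K := fun n => ⟨hypsd n, hytr n⟩
  obtain ⟨ρ, hρcl, φ, hφmono, hφlim⟩ := tendsto_subseq_of_bounded hKbdd hymem
  replace hρcl : ρ ∈ K := hKclosed.closure_subset hρcl
  -- limits
  have hφat : Filter.Tendsto (fun j => (φ j : ℝ)) Filter.atTop Filter.atTop :=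
    tendsto_natCast_atTop_atTop.comp hφmono.tendsto_atTop
  have hinv0 : Filter.Tendsto (fun j => ((φ j : ℝ) + 1)⁻¹) Filter.atTop (nhds 0) :=
    Filter.Tendsto.inv_tendsto_atTop (Filter.tendsto_atTop_add_const_right _ 1 hφat)
  have hlamlim : Filter.Tendsto (fun j => lam (φ j)) Filter.atTop (nhds μ) := by
    have hup : Filter.Tendsto (fun j => μ + ((φ j : ℝ) + 1)⁻¹) Filter.atTop (nhds μ) := by
      simpa using (tendsto_const_nhds (x := μ)).add hinv0
    exact tendsto_of_tendsto_of_tendsto_of_le_of_le tendsto_const_nhds hup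
      (fun j => hlam_lo (φ j)) (fun j => hlam_hi (φ j))
  have hlamC : Filter.Tendsto (fun j => ((lam (φ j) : ℝ) : ℂ)) Filter.atTop (nhds ((μ : ℝ) : ℂ)) :=
    (Complex.continuous_ofReal.tendsto μ).comp hlamlim
  have hTcont : Continuous T := LinearMap.continuous_of_finiteDimensional T
  set F : ℕ → Matrix (Fin D) (Fin D) ℂ :=
    fun j => ((lam (φ j) : ℝ) : ℂ) • y (φ j) - T (y (φ j)) with hFdef
  have hF1 : Filter.Tendsto F Filter.atTop (nhds (((μ : ℝ) : ℂ) • ρ - T ρ)) := by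
    refine Filter.Tendsto.sub ?_ ?_
    · exact hlamC.smul hφlim
    · exact (hTcont.tendsto ρ).comp hφlim
  have hF0 : Filter.Tendsto F Filter.atTop (nhds 0) := by
    exact squeeze_zero_norm (a := fun j => 2 * ((φ j : ℝ) + 1)⁻¹)
      (fun j => hbound (φ j)) (by simpa using hinv0.const_mul 2)
  have hfinal : ((μ : ℝ) : ℂ) • ρ - T ρ = 0 := tendsto_nhds_unique hF1 hF0
  refine ⟨ρ, μ, hρcl.1, hρcl.2, hμ0, ?_⟩
  rw [← sub_eq_zero]
  rw [← neg_sub, hfinal, neg_zero]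
end
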